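/- arXiv:2406.05548 — 4 statements merged into one kernel-verified Lean document; each statement's English description precedes it below -/
import Mathlib

section
/- For any probability distributions F1, F0 on ℝ that are absolutely continuous with respect to Lebesgue measure and any ζ ∈ [0,1], the rank-ATE satisfies partial additivity: τ_r(F1, ζ·F1 + (1−ζ)·F0) − τ_r(F0, ζ·F1 + (1−ζ)·F0) = τ_r(F1, F0). -/
open MeasureTheory ProbabilityTheory

/-- The rank average treatment effect of two distributions `F1`, `F0` on `ℝ`:
`τ_r(F1, F0) = P(Z1 ≥ Z0) - 1/2` where `Z1 ~ F1`, `Z0 ~ F0` are independent. -/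
noncomputable def rankATE (F1 F0 : Measure ℝ) : ℝ :=
  ((F1.prod F0) {p : ℝ × ℝ | p.2 ≤ p.1}).toReal - 1 / 2

lemma meas_S : MeasurableSet {p : ℝ × ℝ | p.2 ≤ p.1} :=
  measurableSet_le measurable_snd measurable_fst

lemma prod_smul_right (μ ν : Measure ℝ) [SFinite μ] [SFinite ν] (c : ENNReal) (hc : c ≠ ⊤) :
    μ.prod (c • ν) = c • (μ.prod ν) := by
  ext s hs
  rw [Measure.prod_apply hs, Measure.smul_apply, Measure.prod_apply hs,
    smul_eq_mul, ← MeasureTheory.lintegral_const_mul' _ _ hc]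
  simp [mul_comm]

lemma diag_null (μ ν : Measure ℝ) [SFinite μ] [SFinite ν] [NullSingletonClass ν] :
    (μ.prod ν) {p : ℝ × ℝ | p.1 = p.2} = 0 := by
  rw [Measure.prod_apply (measurableSet_eq_fun measurable_fst measurable_snd)]
  have : ∀ x : ℝ, ν (Prod.mk x ⁻¹' {p : ℝ × ℝ | p.1 = p.2}) = 0 := by
    intro x
    have : (Prod.mk x ⁻¹' {p : ℝ × ℝ | p.1 = p.2}) = {x} := by
      ext y; simp [eq_comm]
    rw [this]; exact measure_singleton x
  simp [this]

lemma sym_sum (μ ν : Measure ℝ) [IsProbabilityMeasure μ] [IsProbabilityMeasure ν]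
    [NullSingletonClass ν] :
    (μ.prod ν) {p : ℝ × ℝ | p.2 ≤ p.1} + (ν.prod μ) {p : ℝ × ℝ | p.2 ≤ p.1} = 1 := by
  have hswap : (ν.prod μ) {p : ℝ × ℝ | p.2 ≤ p.1}
      = (μ.prod ν) {p : ℝ × ℝ | p.1 ≤ p.2} := by
    rw [← Measure.prod_swap, Measure.map_apply measurable_swap meas_S]
    rfl
  rw [hswap]
  have := measure_union_add_inter (μ := μ.prod ν)
    {p : ℝ × ℝ | p.2 ≤ p.1} (measurableSet_le measurable_fst measurable_snd)
  have hu : {p : ℝ × ℝ | p.2 ≤ p.1} ∪ {p : ℝ × ℝ | p.1 ≤ p.2} = Set.univ := by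
    ext p; simp [le_total p.2 p.1]
  have hi : (μ.prod ν) ({p : ℝ × ℝ | p.2 ≤ p.1} ∩ {p : ℝ × ℝ | p.1 ≤ p.2}) = 0 := by
    have : {p : ℝ × ℝ | p.2 ≤ p.1} ∩ {p : ℝ × ℝ | p.1 ≤ p.2}
        = {p : ℝ × ℝ | p.1 = p.2} := by
      ext p; simp only [Set.mem_inter_iff, Set.mem_setOf_eq]
      constructor
      · rintro ⟨h1, h2⟩; exact le_antisymm h2 h1
      · intro h; simp [h.le, h.ge]
    rw [this]; exact diag_null μ ν
  rw [hu, hi, add_zero, measure_univ] at this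
  exact this.symm

/-- Partial additivity of the rank-ATE: for absolutely continuous probability
distributions `F1, F0` on `ℝ` and `ζ ∈ [0, 1]`,
`τ_r(F1, ζ F1 + (1-ζ) F0) - τ_r(F0, ζ F1 + (1-ζ) F0) = τ_r(F1, F0)`. -/
theorem rankATE_partial_additivity
    (F1 F0 : Measure ℝ) [IsProbabilityMeasure F1] [IsProbabilityMeasure F0]
    (h1 : F1 ≪ MeasureTheory.volume) (h0 : F0 ≪ MeasureTheory.volume)
    (ζ : ℝ) (hζ : ζ ∈ Set.Icc (0 : ℝ) 1) :
    rankATE F1 (ENNReal.ofReal ζ • F1 + ENNReal.ofReal (1 - ζ) • F0)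
      - rankATE F0 (ENNReal.ofReal ζ • F1 + ENNReal.ofReal (1 - ζ) • F0)
      = rankATE F1 F0 := by
  obtain ⟨hζ0, hζ1⟩ := hζ
  have hna1 : NullSingletonClass F1 := ⟨fun x => h1 (measure_singleton x)⟩
  have hna0 : NullSingletonClass F0 := ⟨fun x => h0 (measure_singleton x)⟩
  set S := {p : ℝ × ℝ | p.2 ≤ p.1} with hS
  -- measures of products
  have hfin : ∀ (μ ν : Measure ℝ) [IsProbabilityMeasure μ] [IsProbabilityMeasure ν],
      (μ.prod ν) S ≠ ⊤ := fun μ ν _ _ => measure_ne_top _ _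
  -- expand the mixture
  have expand : ∀ (μ : Measure ℝ) [IsProbabilityMeasure μ],
      (μ.prod (ENNReal.ofReal ζ • F1 + ENNReal.ofReal (1 - ζ) • F0)) S
        = ENNReal.ofReal ζ * (μ.prod F1) S
          + ENNReal.ofReal (1 - ζ) * (μ.prod F0) S := by
    intro μ _
    rw [Measure.prod_add, prod_smul_right _ _ _ ENNReal.ofReal_ne_top,
      prod_smul_right _ _ _ ENNReal.ofReal_ne_top]
    simp [Measure.smul_apply]
  have h11 : (F1.prod F1) S + (F1.prod F1) S = 1 := sym_sum F1 F1
  have h00 : (F0.prod F0) S + (F0.prod F0) S = 1 := sym_sum F0 F0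
  have h10 : (F1.prod F0) S + (F0.prod F1) S = 1 := sym_sum F1 F0
  -- pass to reals
  set a := ((F1.prod F1) S).toReal
  set b := ((F1.prod F0) S).toReal
  set c := ((F0.prod F1) S).toReal
  set d := ((F0.prod F0) S).toReal
  have ha : a + a = 1 := by
    have := congrArg ENNReal.toReal h11
    rwa [ENNReal.toReal_add (hfin F1 F1) (hfin F1 F1), ENNReal.toReal_one] at this
  have hd : d + d = 1 := by
    have := congrArg ENNReal.toReal h00
    rwa [ENNReal.toReal_add (hfin F0 F0) (hfin F0 F0), ENNReal.toReal_one] at this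
  have hbc : b + c = 1 := by
    have := congrArg ENNReal.toReal h10
    rwa [ENNReal.toReal_add (hfin F1 F0) (hfin F0 F1), ENNReal.toReal_one] at this
  have key : ∀ (μ : Measure ℝ) [IsProbabilityMeasure μ],
      ((μ.prod (ENNReal.ofReal ζ • F1 + ENNReal.ofReal (1 - ζ) • F0)) S).toReal
        = ζ * ((μ.prod F1) S).toReal + (1 - ζ) * ((μ.prod F0) S).toReal := by
    intro μ _
    rw [expand μ, ENNReal.toReal_add (by finiteness) (by finiteness),
      ENNReal.toReal_mul, ENNReal.toReal_mul, ENNReal.toReal_ofReal hζ0,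
      ENNReal.toReal_ofReal (by linarith)]
  unfold rankATE
  rw [key F1, key F0]
  show ζ * a + (1 - ζ) * b - 1 / 2 - (ζ * c + (1 - ζ) * d - 1 / 2) = b - 1 / 2
  rw [show a = 1/2 by linarith, show d = 1/2 by linarith, show c = 1 - b by linarith]
  ring
end

section
/- Let Z1 = μ1 + ν1 and Z0 = μ0 + ν0, where ν1 and ν0 are independent real random variables, each symmetrically distributed about 0 (not necessarily identically distributed), and let F1, F0 denote the distributions of Z1, Z0. If additionally the distribution of ν1 − ν0 assigns positive probability to every neighborhood of each point where needed to avoid atoms at μ0 − μ1 (e.g., Z1, Z0 are continuously distributed), then τ_r(F1, F0) > 0 if and only if μ1 > μ0; consequently the rank-ATE has the same sign as the mean difference μ1 − μ0. -/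
open MeasureTheory ProbabilityTheory

/-- Location-shift model with symmetric noise: `Z1 = μ1 + ν1`, `Z0 = μ0 + ν0` with
`ν1 ⟂ ν0` each symmetrically distributed about `0` (not necessarily identically
distributed).  If the law of `ν1 - ν0` has no atoms and assigns positive probability
to every neighborhood of `0` (as when `Z1, Z0` are continuously distributed with full
support near the relevant point), then `τ_r(F1, F0) > 0 ⟺ μ1 > μ0`; the rank-ATE has
the same sign as the mean difference `μ1 - μ0`. -/
theorem rankATE_pos_iff_of_symmetric
    {Ω : Type*} [MeasurableSpace Ω] (P : Measure Ω) [IsProbabilityMeasure P]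
    (ν1 ν0 : Ω → ℝ) (hm1 : Measurable ν1) (hm0 : Measurable ν0)
    (hindep : IndepFun ν1 ν0 P)
    (hsym1 : P.map ν1 = P.map (fun ω => -ν1 ω))
    (hsym0 : P.map ν0 = P.map (fun ω => -ν0 ω))
    (μ1 μ0 : ℝ)
    (hnoatom : ∀ x : ℝ, P.map (fun ω => ν1 ω - ν0 ω) {x} = 0)
    (hpos : ∀ ε : ℝ, 0 < ε → 0 < P.map (fun ω => ν1 ω - ν0 ω) (Set.Ioo (-ε) ε)) :
    0 < rankATE (P.map (fun ω => μ1 + ν1 ω)) (P.map (fun ω => μ0 + ν0 ω)) ↔ μ0 < μ1 := by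
  classical
  set c : ℝ := μ0 - μ1 with hc
  set D : Ω → ℝ := fun ω => ν1 ω - ν0 ω with hD
  have hmD : Measurable D := hm1.sub hm0
  set ρ : Measure ℝ := P.map D with hρ
  have hρprob : IsProbabilityMeasure ρ := Measure.isProbabilityMeasure_map hmD.aemeasurable
  -- joint law of (ν1, ν0) is the product of the marginals
  have hjoint : P.map (fun ω => (ν1 ω, ν0 ω)) = (P.map ν1).prod (P.map ν0) :=
    (indepFun_iff_map_prod_eq_prod_map_map hm1.aemeasurable hm0.aemeasurable).mp hindep
  have hindep' : IndepFun (fun ω => -ν1 ω) (fun ω => -ν0 ω) P :=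
    hindep.comp measurable_neg measurable_neg
  have hjoint' : P.map (fun ω => (-ν1 ω, -ν0 ω))
      = (P.map fun ω => -ν1 ω).prod (P.map fun ω => -ν0 ω) :=
    (indepFun_iff_map_prod_eq_prod_map_map hm1.neg.aemeasurable
      hm0.neg.aemeasurable).mp hindep'
  -- the law of D = ν1 - ν0 is symmetric
  have hsymρ : ρ.map (fun x : ℝ => -x) = ρ := by
    have h1 : ρ.map (fun x : ℝ => -x) = P.map (fun ω => (-ν1 ω) - (-ν0 ω)) := by
      rw [hρ, Measure.map_map measurable_neg hmD]
      congr 1; ext ω; simp [hD]; ring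
    have h2 : P.map (fun ω => (-ν1 ω) - (-ν0 ω))
        = (P.map (fun ω => (-ν1 ω, -ν0 ω))).map (fun p : ℝ × ℝ => p.1 - p.2) := by
      rw [Measure.map_map (show Measurable (fun p : ℝ × ℝ => p.1 - p.2) from measurable_fst.sub measurable_snd) (show Measurable (fun ω => (-ν1 ω, -ν0 ω)) from hm1.neg.prodMk hm0.neg)]
      rfl
    have h3 : P.map D = (P.map (fun ω => (ν1 ω, ν0 ω))).map (fun p : ℝ × ℝ => p.1 - p.2) := by
      rw [Measure.map_map (show Measurable (fun p : ℝ × ℝ => p.1 - p.2) from measurable_fst.sub measurable_snd) (hm1.prodMk hm0)]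
      rfl
    rw [h1, h2, hjoint', ← hsym1, ← hsym0, ← hjoint, hρ, h3]
  have hsymap : ∀ s : Set ℝ, MeasurableSet s → ρ ((fun x : ℝ => -x) ⁻¹' s) = ρ s := by
    intro s hs
    conv_rhs => rw [← hsymρ]
    rw [Measure.map_apply measurable_neg hs]
  have hatom : ∀ x : ℝ, ρ {x} = 0 := hnoatom
  -- ρ (Ici 0) = 1/2
  have hIoi : ρ (Set.Ioi (0:ℝ)) = ρ (Set.Ici (0:ℝ)) := by
    have hu : Set.Ici (0:ℝ) = Set.Ioi 0 ∪ {0} := by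
      ext x; simp [le_iff_lt_or_eq, or_comm, eq_comm]
    rw [hu, measure_union (by simp) (measurableSet_singleton 0), hatom 0, add_zero]
  have hIic : ρ (Set.Iic (0:ℝ)) = ρ (Set.Ici (0:ℝ)) := by
    have := hsymap (Set.Ici 0) measurableSet_Ici
    simpa using this
  have hhalf : ρ (Set.Ici (0:ℝ)) = 1/2 := by
    have hsplit : ρ (Set.Iic (0:ℝ)) + ρ (Set.Ioi (0:ℝ)) = 1 := by
      rw [← measure_union (by simp [Set.disjoint_left]) measurableSet_Ioi,
        Set.Iic_union_Ioi, measure_univ]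
    rw [hIic, hIoi, ← two_mul] at hsplit
    rw [ENNReal.eq_div_iff (by norm_num) (by norm_num)]
    exact hsplit
  -- rewrite of the product-measure probability
  have hkey : ((P.map (fun ω => μ1 + ν1 ω)).prod (P.map (fun ω => μ0 + ν0 ω)))
      {p : ℝ × ℝ | p.2 ≤ p.1} = ρ (Set.Ici c) := by
    have hPD : (P.prod P).map (fun q : Ω × Ω => ν1 q.1 - ν0 q.2) = ρ := by
      have e1 : (P.map ν1).prod (P.map ν0)
          = (P.prod P).map (Prod.map ν1 ν0) := Measure.map_prod_map _ _ hm1 hm0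
      have e2 : (P.prod P).map (fun q : Ω × Ω => ν1 q.1 - ν0 q.2)
          = ((P.prod P).map (Prod.map ν1 ν0)).map (fun p : ℝ × ℝ => p.1 - p.2) := by
        rw [Measure.map_map (show Measurable (fun p : ℝ × ℝ => p.1 - p.2) from measurable_fst.sub measurable_snd) (hm1.prodMap hm0)]
        rfl
      have e3 : ρ = (P.map (fun ω => (ν1 ω, ν0 ω))).map (fun p : ℝ × ℝ => p.1 - p.2) := by
        rw [hρ, Measure.map_map (show Measurable (fun p : ℝ × ℝ => p.1 - p.2) from measurable_fst.sub measurable_snd) (hm1.prodMk hm0)]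
        rfl
      rw [e2, ← e1, ← hjoint, ← e3]
    rw [Measure.map_prod_map _ _ (show Measurable (fun ω => μ1 + ν1 ω) from measurable_const.add hm1) (show Measurable (fun ω => μ0 + ν0 ω) from measurable_const.add hm0),
      Measure.map_apply ((show Measurable (fun ω => μ1 + ν1 ω) from measurable_const.add hm1).prodMap (show Measurable (fun ω => μ0 + ν0 ω) from measurable_const.add hm0))
        (measurableSet_le measurable_snd measurable_fst),
      ← hPD,
      Measure.map_apply (show Measurable (fun q : Ω × Ω => ν1 q.1 - ν0 q.2) from
        (hm1.comp measurable_fst).sub (hm0.comp measurable_snd)) measurableSet_Ici]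
    congr 1
    ext q
    simp only [Set.mem_preimage, Prod.map, Set.mem_setOf_eq, Set.mem_Ici, hc]
    constructor <;> intro h <;> linarith
  -- the main measure-theoretic equivalence
  have hiff : (1/2 : ENNReal) < ρ (Set.Ici c) ↔ c < 0 := by
    constructor
    · intro h
      by_contra hcn
      push_neg at hcn
      have hsub : Set.Ici c ⊆ Set.Ici (0:ℝ) := Set.Ici_subset_Ici.mpr hcn
      have := measure_mono (μ := ρ) hsub
      rw [hhalf] at this
      exact absurd (h.trans_le this) (lt_irrefl _)
    · intro hc0
      -- ρ (Ioo c 0) > 0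
      have hIooc : 0 < ρ (Set.Ioo c (0:ℝ)) := by
        have h1 : 0 < ρ (Set.Ioo c (-c)) := by
          have := hpos (-c) (by linarith)
          simpa [hρ, hD, neg_neg] using this
        by_contra hz
        push_neg at hz
        have hz0 : ρ (Set.Ioo c (0:ℝ)) = 0 := le_antisymm hz (zero_le)
        -- ρ (Ico 0 (-c)) = ρ (Ioc c 0) ≤ ρ (Ioo c 0) + ρ {0} = 0
        have hIco : ρ (Set.Ico (0:ℝ) (-c)) = ρ (Set.Ioc c (0:ℝ)) := by
          have hpre : (fun x : ℝ => -x) ⁻¹' Set.Ico (0:ℝ) (-c) = Set.Ioc c (0:ℝ) := by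
            ext x
            simp only [Set.mem_preimage, Set.mem_Ico, Set.mem_Ioc]
            constructor <;> intro h <;> constructor <;> linarith [h.1, h.2]
          rw [← hpre, hsymap _ measurableSet_Ico]
        have hIoc0 : ρ (Set.Ioc c (0:ℝ)) = 0 := by
          have hu : Set.Ioc c (0:ℝ) = Set.Ioo c 0 ∪ {0} := by
            ext x; simp only [Set.mem_Ioc, Set.mem_union, Set.mem_Ioo, Set.mem_singleton_iff]
            constructor
            · rintro ⟨h1, h2⟩
              rcases lt_or_eq_of_le h2 with h | h
              · exact Or.inl ⟨h1, h⟩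
              · exact Or.inr h
            · rintro (⟨h1, h2⟩ | h)
              · exact ⟨h1, le_of_lt h2⟩
              · exact ⟨h ▸ hc0, le_of_eq h⟩
          rw [hu]
          refine le_antisymm ?_ (zero_le)
          calc ρ (Set.Ioo c 0 ∪ {0}) ≤ ρ (Set.Ioo c 0) + ρ {0} := measure_union_le _ _
            _ = 0 := by rw [hz0, hatom 0, add_zero]
        have hcover : Set.Ioo c (-c) ⊆ Set.Ioo c 0 ∪ Set.Ico (0:ℝ) (-c) := by
          intro x hx
          rcases lt_or_ge x 0 with h | h
          · exact Or.inl ⟨hx.1, h⟩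
          · exact Or.inr ⟨h, hx.2⟩
        have : ρ (Set.Ioo c (-c)) = 0 := by
          refine le_antisymm ?_ (zero_le)
          calc ρ (Set.Ioo c (-c)) ≤ ρ (Set.Ioo c 0 ∪ Set.Ico (0:ℝ) (-c)) := measure_mono hcover
            _ ≤ ρ (Set.Ioo c 0) + ρ (Set.Ico (0:ℝ) (-c)) := measure_union_le _ _
            _ = 0 := by rw [hz0, hIco, hIoc0, add_zero]
        rw [this] at h1
        exact lt_irrefl _ h1
      -- ρ (Ici c) = ρ (Ico c 0) + ρ (Ici 0)
      have hsplit : ρ (Set.Ici c) = ρ (Set.Ico c (0:ℝ)) + ρ (Set.Ici (0:ℝ)) := by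
        rw [← measure_union (by simp [Set.disjoint_left])
          measurableSet_Ici, Set.Ico_union_Ici_eq_Ici (le_of_lt hc0)]
      have hpos' : 0 < ρ (Set.Ico c (0:ℝ)) :=
        lt_of_lt_of_le hIooc (measure_mono Set.Ioo_subset_Ico_self)
      rw [hsplit, hhalf]
      calc (1/2 : ENNReal) < 1/2 + ρ (Set.Ico c (0:ℝ)) :=
            ENNReal.lt_add_right (by norm_num) (ne_of_gt hpos')
        _ = ρ (Set.Ico c (0:ℝ)) + 1/2 := add_comm _ _
    -- conclude
  have hne : ρ (Set.Ici c) ≠ ⊤ := measure_ne_top _ _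
  rw [rankATE, hkey, sub_pos]
  rw [show (1/2 : ℝ) = (1/2 : ENNReal).toReal by simp]
  rw [ENNReal.toReal_lt_toReal (by norm_num) hne]
  rw [hiff, hc]
  constructor <;> intro h <;> linarith
end

section
/- If the distribution F1 first-order stochastically dominates the distribution F0 (i.e., F1(y) ≤ F0(y) for all y ∈ ℝ), then the rank-ATE is nonnegative: τ_r(F1, F0) ≥ 0. -/
open MeasureTheory ProbabilityTheory
open scoped ENNReal

/-- If `F1` first-order stochastically dominates `F0`, i.e. the CDF of `F1` lies below
the CDF of `F0` everywhere, then the rank-ATE is nonnegative: `τ_r(F1, F0) ≥ 0`. -/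
theorem rankATE_nonneg_of_stochasticDominance
    (F1 F0 : Measure ℝ) [IsProbabilityMeasure F1] [IsProbabilityMeasure F0]
    (hdom : ∀ y : ℝ, cdf F1 y ≤ cdf F0 y) :
    0 ≤ rankATE F1 F0 := by
  have hA : MeasurableSet {p : ℝ × ℝ | p.2 ≤ p.1} :=
    measurableSet_le measurable_snd measurable_fst
  have hIic : ∀ (ν : Measure ℝ) (x : ℝ),
      ν (Prod.mk x ⁻¹' {p : ℝ × ℝ | p.2 ≤ p.1}) = ν (Set.Iic x) := by
    intro ν x; rfl
  -- Step 1: pointwise domination of Iic measures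
  have hpt : ∀ x : ℝ, F1 (Set.Iic x) ≤ F0 (Set.Iic x) := by
    intro x
    have h1 := cdf_eq_real (μ := F1) x
    have h0 := cdf_eq_real (μ := F0) x
    have := hdom x
    rw [h1, h0] at this
    exact (ENNReal.toReal_le_toReal (measure_ne_top _ _) (measure_ne_top _ _)).mp this
  have step1 : (F1.prod F1) {p : ℝ × ℝ | p.2 ≤ p.1}
      ≤ (F1.prod F0) {p : ℝ × ℝ | p.2 ≤ p.1} := by
    rw [Measure.prod_apply hA, Measure.prod_apply hA]
    refine lintegral_mono fun x => ?_
    rw [hIic F1 x, hIic F0 x]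
    exact hpt x
  -- Step 2: (F1.prod F1) A ≥ 1/2
  have hswap : (F1.prod F1) {p : ℝ × ℝ | p.1 ≤ p.2}
      = (F1.prod F1) {p : ℝ × ℝ | p.2 ≤ p.1} := by
    have h := Measure.prod_swap (μ := F1) (ν := F1)
    calc (F1.prod F1) {p : ℝ × ℝ | p.1 ≤ p.2}
        = ((F1.prod F1).map Prod.swap) {p : ℝ × ℝ | p.1 ≤ p.2} := by rw [h]
      _ = (F1.prod F1) (Prod.swap ⁻¹' {p : ℝ × ℝ | p.1 ≤ p.2}) := by
          rw [Measure.map_apply measurable_swap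
            (measurableSet_le measurable_fst measurable_snd)]
      _ = (F1.prod F1) {p : ℝ × ℝ | p.2 ≤ p.1} := rfl
  have hcover : (1 : ℝ≥0∞) ≤ (F1.prod F1) {p : ℝ × ℝ | p.2 ≤ p.1}
      + (F1.prod F1) {p : ℝ × ℝ | p.1 ≤ p.2} := by
    have : (Set.univ : Set (ℝ × ℝ)) ⊆
        {p : ℝ × ℝ | p.2 ≤ p.1} ∪ {p : ℝ × ℝ | p.1 ≤ p.2} := by
      intro p _; exact le_total p.2 p.1
    calc (1 : ℝ≥0∞) = (F1.prod F1) Set.univ := (measure_univ).symm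
      _ ≤ (F1.prod F1) ({p : ℝ × ℝ | p.2 ≤ p.1} ∪ {p : ℝ × ℝ | p.1 ≤ p.2}) :=
          measure_mono this
      _ ≤ _ := measure_union_le _ _
  have step2 : (1 : ℝ≥0∞) / 2 ≤ (F1.prod F1) {p : ℝ × ℝ | p.2 ≤ p.1} := by
    rw [hswap] at hcover
    rw [ENNReal.div_le_iff (by norm_num) (by norm_num)]
    calc (1 : ℝ≥0∞) ≤ _ := hcover
      _ = (F1.prod F1) {p : ℝ × ℝ | p.2 ≤ p.1} * 2 := by ring
  have hfin : (F1.prod F0) {p : ℝ × ℝ | p.2 ≤ p.1} ≠ ⊤ := measure_ne_top _ _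
  have : (1 : ℝ≥0∞) / 2 ≤ (F1.prod F0) {p : ℝ × ℝ | p.2 ≤ p.1} := le_trans step2 step1
  have htr : (1 : ℝ) / 2 ≤ ((F1.prod F0) {p : ℝ × ℝ | p.2 ≤ p.1}).toReal := by
    have := ENNReal.toReal_mono hfin this
    simpa using this
  unfold rankATE
  linarith
end

section
/- Under SUTVA, absolute continuity of the potential outcome distributions, and completely random assignment with P(W_i = 1 | Y_i(1), Y_i(0), X_i) = π ∈ (0,1), the rank-OLS coefficient β̂_nox — defined as the OLS slope on W_i in the regression of R^Y_i/n on a constant and W_i — converges in probability, as n → ∞, to the rank-ATE τ_r(F_{Y(1)}, F_{Y(0)}). -/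
open MeasureTheory ProbabilityTheory Filter

/-- The OLS slope coefficient on the regressor `W` in a simple linear regression of the
outcome `V` on a constant and `W`, based on observations `i = 0, …, n-1`. -/
noncomputable def olsSlope (n : ℕ) (W V : ℕ → ℝ) : ℝ :=
  (∑ i ∈ Finset.range n,
      (W i - (∑ j ∈ Finset.range n, W j) / n) * (V i - (∑ j ∈ Finset.range n, V j) / n)) /
  (∑ i ∈ Finset.range n, (W i - (∑ j ∈ Finset.range n, W j) / n) ^ 2)

open Finset Topology
open scoped ENNReal

lemma olsSlope_eq (n : ℕ) (hn : 1 ≤ n) (W V : ℕ → ℝ) (hW : ∀ i, W i = 0 ∨ W i = 1) :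
    olsSlope n W V =
      ((∑ i ∈ range n, W i * V i) / n
        - ((∑ i ∈ range n, W i) / n) * ((∑ i ∈ range n, V i) / n)) /
      (((∑ i ∈ range n, W i) / n) - ((∑ i ∈ range n, W i) / n) ^ 2) := by
  have hn0 : (n : ℝ) ≠ 0 := Nat.cast_ne_zero.mpr (by omega)
  set SW := ∑ i ∈ range n, W i with hSW
  set SV := ∑ i ∈ range n, V i with hSV
  have hnum : (∑ i ∈ range n, (W i - SW / n) * (V i - SV / n))
      = (n : ℝ) * ((∑ i ∈ range n, W i * V i) / n - (SW / n) * (SV / n)) := by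
    have h1 : ∀ i, (W i - SW / n) * (V i - SV / n)
        = W i * V i - (SV / n) * W i - (SW / n) * V i + (SW / n) * (SV / n) := by
      intro i; ring
    rw [Finset.sum_congr rfl fun i _ => h1 i]
    simp only [Finset.sum_add_distrib, Finset.sum_sub_distrib, ← Finset.mul_sum,
      Finset.sum_const, Finset.card_range, nsmul_eq_mul]
    field_simp
    ring
  have hden : (∑ i ∈ range n, (W i - SW / n) ^ 2)
      = (n : ℝ) * ((SW / n) - (SW / n) ^ 2) := by
    have h1 : ∀ i, (W i - SW / n) ^ 2
        = W i - 2 * (SW / n) * W i + (SW / n) ^ 2 := by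
      intro i
      have : W i * W i = W i := by rcases hW i with h | h <;> rw [h] <;> ring
      nlinarith [this]
    rw [Finset.sum_congr rfl fun i _ => h1 i]
    simp only [Finset.sum_add_distrib, Finset.sum_sub_distrib, ← Finset.mul_sum,
      Finset.sum_const, Finset.card_range, nsmul_eq_mul]
    field_simp
    ring
  rw [olsSlope, hnum, hden, mul_div_mul_left _ _ hn0]

lemma rank_sum (n : ℕ) (f : ℕ → ℝ)
    (hinj : ∀ i ∈ range n, ∀ j ∈ range n, f i = f j → i = j) :
    ∑ i ∈ range n, ∑ j ∈ range n, (if f j ≤ f i then (1 : ℝ) else 0)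
      = n * (n + 1) / 2 := by
  set S := ∑ i ∈ range n, ∑ j ∈ range n, (if f j ≤ f i then (1 : ℝ) else 0) with hS
  have hswap : S = ∑ i ∈ range n, ∑ j ∈ range n, (if f i ≤ f j then (1 : ℝ) else 0) := by
    rw [hS, Finset.sum_comm]
  have key : S + S = (n : ℝ) * n + n := by
    nth_rewrite 2 [hswap]
    rw [hS, ← Finset.sum_add_distrib]
    have : ∀ i ∈ range n, (∑ j ∈ range n, (if f j ≤ f i then (1:ℝ) else 0))
        + (∑ j ∈ range n, (if f i ≤ f j then (1:ℝ) else 0))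
        = ∑ j ∈ range n, (1 + if i = j then (1:ℝ) else 0) := by
      intro i hi
      rw [← Finset.sum_add_distrib]
      refine Finset.sum_congr rfl fun j hj => ?_
      by_cases hij : i = j
      · subst hij; simp
      · have hne : f j ≠ f i := fun h => hij (hinj j hj i hi h).symm
        rcases hne.lt_or_gt with h | h
        · simp [h.le, not_le.mpr h, hij]
        · simp [h.le, not_le.mpr h, hij]
    rw [Finset.sum_congr rfl this]
    simp only [Finset.sum_add_distrib, Finset.sum_const, Finset.card_range, nsmul_eq_mul, mul_one]
    have : ∀ i ∈ range n, (∑ j ∈ range n, if i = j then (1:ℝ) else 0) = 1 := by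
      intro i hi
      rw [Finset.sum_ite_eq]
      simp [Finset.mem_range.mp hi]
    rw [Finset.sum_congr rfl this]
    rw [Finset.sum_const, Finset.card_range, nsmul_eq_mul, mul_one]
  linarith

lemma prod_diag_null (μ ν : Measure ℝ) [SFinite ν] (hν : ∀ x : ℝ, ν {x} = 0) :
    (μ.prod ν) {p : ℝ × ℝ | p.1 = p.2} = 0 := by
  have hm : MeasurableSet {p : ℝ × ℝ | p.1 = p.2} :=
    measurableSet_eq_fun measurable_fst measurable_snd
  rw [Measure.prod_apply hm]
  have : ∀ x : ℝ, ν (Prod.mk x ⁻¹' {p : ℝ × ℝ | p.1 = p.2}) = 0 := by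
    intro x
    have : Prod.mk x ⁻¹' {p : ℝ × ℝ | p.1 = p.2} = {x} := by
      ext y; simp [eq_comm]
    rw [this, hν]
  calc ∫⁻ x, ν (Prod.mk x ⁻¹' {p : ℝ × ℝ | p.1 = p.2}) ∂μ = ∫⁻ _, 0 ∂μ := by
        exact lintegral_congr this
    _ = 0 := lintegral_zero

lemma meas_eq_null {Ω : Type*} [MeasurableSpace Ω] (P : Measure Ω) [IsProbabilityMeasure P]
    (U V : Ω → ℝ) (hU : Measurable U) (hV : Measurable V)
    (h : IndepFun U V P) (hat : ∀ x : ℝ, (P.map V) {x} = 0) :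
    P {ω | U ω = V ω} = 0 := by
  have hm : MeasurableSet {p : ℝ × ℝ | p.1 = p.2} :=
    measurableSet_eq_fun measurable_fst measurable_snd
  have hmap : P.map (fun ω => (U ω, V ω)) = (P.map U).prod (P.map V) :=
    (indepFun_iff_map_prod_eq_prod_map_map hU.aemeasurable hV.aemeasurable).mp h
  have : {ω | U ω = V ω} = (fun ω => (U ω, V ω)) ⁻¹' {p : ℝ × ℝ | p.1 = p.2} := rfl
  rw [this, ← Measure.map_apply (hU.prodMk hV) hm, hmap]
  exact prod_diag_null _ _ hat

lemma prod_le_half (μ : Measure ℝ) [IsProbabilityMeasure μ] (hat : ∀ x : ℝ, μ {x} = 0) :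
    (μ.prod μ) {p : ℝ × ℝ | p.2 ≤ p.1} = 1 / 2 := by
  set A : Set (ℝ × ℝ) := {p : ℝ × ℝ | p.2 ≤ p.1} with hA
  set B : Set (ℝ × ℝ) := {p : ℝ × ℝ | p.1 ≤ p.2} with hB
  have hmA : MeasurableSet A := measurableSet_le measurable_snd measurable_fst
  have hmB : MeasurableSet B := measurableSet_le measurable_fst measurable_snd
  have hswap : (μ.prod μ) A = (μ.prod μ) B := by
    have h1 : (μ.prod μ) A = Measure.map Prod.swap (μ.prod μ) A := by
      rw [Measure.prod_swap]
    rw [h1, Measure.map_apply measurable_swap hmA]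
    congr 1
  have hunion : A ∪ B = Set.univ := by
    ext p; simp [hA, hB, le_total p.2 p.1]
  have hinter : A ∩ B = {p : ℝ × ℝ | p.1 = p.2} := by
    ext p; simp only [hA, hB, Set.mem_inter_iff, Set.mem_setOf_eq]
    constructor
    · rintro ⟨h1, h2⟩; exact le_antisymm h2 h1
    · rintro h; exact ⟨h.ge, h.le⟩
  have hdiag : (μ.prod μ) (A ∩ B) = 0 := by
    rw [hinter]; exact prod_diag_null _ _ hat
  have hsum : (μ.prod μ) A + (μ.prod μ) B = 1 := by
    have := measure_union_add_inter (μ := μ.prod μ) A hmB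
    rw [hunion, hdiag, add_zero] at this
    rw [← this, measure_univ]
  rw [hswap] at hsum
  have h2 : (2 : ℝ≥0∞) * (μ.prod μ) B = 1 := by rw [two_mul]; exact hsum
  rw [hswap]
  exact (ENNReal.eq_div_iff (by norm_num) (by norm_num)).mpr h2

lemma bdd_integrable {Ω : Type*} [MeasurableSpace Ω] (P : Measure Ω) [IsProbabilityMeasure P]
    (f : Ω → ℝ) (hf : Measurable f) (C : ℝ) (hb : ∀ ω, |f ω| ≤ C) : Integrable f P := by
  refine (integrable_const C).mono' hf.aestronglyMeasurable ?_
  exact Filter.Eventually.of_forall fun ω => by simpa using hb ω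

lemma ustat_moment {Ω E' : Type*} [MeasurableSpace Ω] [MeasurableSpace E'] (P : Measure Ω)
    [IsProbabilityMeasure P] (Ξ : ℕ → Ω → E') (hmeas : ∀ i, Measurable (Ξ i))
    (hindep : iIndepFun Ξ P)
    (h : E' × E' → ℝ) (hh : Measurable h)
    (hb0 : ∀ x, 0 ≤ h x) (hb1 : ∀ x, h x ≤ 1)
    (c : ℕ → ℕ → ℝ) (hcdef : ∀ i j, c i j = ∫ ω, h (Ξ i ω, Ξ j ω) ∂P)
    (n : ℕ) :
    (∫ ω, (∑ p ∈ range n ×ˢ range n, (h (Ξ p.1 ω, Ξ p.2 ω) - c p.1 p.2))^2 ∂P)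
      ≤ 4 * (n : ℝ)^3 := by
  have Hmeas : ∀ i j : ℕ, Measurable (fun ω => h (Ξ i ω, Ξ j ω)) :=
    fun i j => hh.comp ((hmeas i).prodMk (hmeas j))
  have Hb : ∀ (i j : ℕ) ω, |h (Ξ i ω, Ξ j ω)| ≤ 1 :=
    fun i j ω => abs_le.mpr ⟨by linarith [hb0 (Ξ i ω, Ξ j ω)], hb1 _⟩
  have Hint : ∀ i j : ℕ, Integrable (fun ω => h (Ξ i ω, Ξ j ω)) P :=
    fun i j => bdd_integrable P _ (Hmeas i j) 1 (Hb i j)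
  have hone : (∫ (_ : Ω), (1:ℝ) ∂P) = 1 := by simp
  have hc0 : ∀ i j, 0 ≤ c i j := fun i j => (hcdef i j) ▸ integral_nonneg fun ω => hb0 _
  have hc1 : ∀ i j, c i j ≤ 1 := by
    intro i j
    rw [hcdef i j]
    calc (∫ ω, h (Ξ i ω, Ξ j ω) ∂P) ≤ ∫ (_ : Ω), (1:ℝ) ∂P :=
      integral_mono (Hint i j) (integrable_const 1) fun ω => hb1 _
    _ = 1 := hone
  set D : ℕ → ℕ → Ω → ℝ := fun i j ω => h (Ξ i ω, Ξ j ω) - c i j with hDdef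
  have Dmeas : ∀ i j, Measurable (D i j) := fun i j => (Hmeas i j).sub measurable_const
  have Db : ∀ i j ω, |D i j ω| ≤ 1 := by
    intro i j ω
    have h1 := Hb i j ω
    rw [abs_le] at h1 ⊢
    exact ⟨by simp only [hDdef]; nlinarith [hc1 i j, hb0 (Ξ i ω, Ξ j ω)],
      by simp only [hDdef]; nlinarith [hc0 i j]⟩
  have Dint : ∀ i j, Integrable (D i j) P := fun i j => bdd_integrable P _ (Dmeas i j) 1 (Db i j)
  have Dzero : ∀ i j, (∫ ω, D i j ω ∂P) = 0 := by
    intro i j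
    simp only [hDdef]
    rw [integral_sub (Hint i j) (integrable_const _), integral_const]
    simp [hcdef i j]
  have hintpq : ∀ (p q : ℕ × ℕ), Integrable (fun ω => D p.1 p.2 ω * D q.1 q.2 ω) P := by
    intro p q
    refine bdd_integrable P _ ((Dmeas p.1 p.2).mul (Dmeas q.1 q.2)) 1 fun ω => ?_
    rw [abs_mul]
    exact mul_le_one₀ (Db _ _ ω) (abs_nonneg _) (Db _ _ ω)
  have hexp : ∀ ω, (∑ p ∈ range n ×ˢ range n, D p.1 p.2 ω)^2
      = ∑ p ∈ range n ×ˢ range n, ∑ q ∈ range n ×ˢ range n, D p.1 p.2 ω * D q.1 q.2 ω := by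
    intro ω; rw [sq, Finset.sum_mul_sum]
  have hswap : (∫ ω, (∑ p ∈ range n ×ˢ range n, D p.1 p.2 ω)^2 ∂P)
      = ∑ p ∈ range n ×ˢ range n, ∑ q ∈ range n ×ˢ range n,
          ∫ ω, D p.1 p.2 ω * D q.1 q.2 ω ∂P := by
    rw [integral_congr_ae (Filter.Eventually.of_forall hexp)]
    rw [integral_finset_sum _ (fun p _ => integrable_finset_sum _ (fun q _ => hintpq p q))]
    exact Finset.sum_congr rfl fun p _ => integral_finset_sum _ fun q _ => hintpq p q
  have main : (∫ ω, (∑ p ∈ range n ×ˢ range n, D p.1 p.2 ω)^2 ∂P) ≤ 4 * (n:ℝ)^3 := by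
    rw [hswap]
    set κ : ℕ × ℕ → ℕ × ℕ → ℝ := fun p q =>
      (if p.1 = q.1 then (1:ℝ) else 0) + (if p.1 = q.2 then (1:ℝ) else 0)
      + (if p.2 = q.1 then (1:ℝ) else 0) + (if p.2 = q.2 then (1:ℝ) else 0) with hκ
    have e : ∀ (b : Prop) (_ : Decidable b), (0:ℝ) ≤ if b then (1:ℝ) else 0 := by
      intro b hb; split <;> norm_num
    have hterm : ∀ p q : ℕ × ℕ, (∫ ω, D p.1 p.2 ω * D q.1 q.2 ω ∂P) ≤ κ p q := by
      intro p q
      by_cases hd : p.1 = q.1 ∨ p.1 = q.2 ∨ p.2 = q.1 ∨ p.2 = q.2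
      · have hint1 : (∫ ω, D p.1 p.2 ω * D q.1 q.2 ω ∂P) ≤ 1 := by
          calc (∫ ω, D p.1 p.2 ω * D q.1 q.2 ω ∂P) ≤ ∫ (_ : Ω), (1:ℝ) ∂P := by
                refine integral_mono (hintpq p q) (integrable_const 1) fun ω => ?_
                calc D p.1 p.2 ω * D q.1 q.2 ω ≤ |D p.1 p.2 ω * D q.1 q.2 ω| := le_abs_self _
                _ ≤ 1 := by rw [abs_mul]; exact mul_le_one₀ (Db _ _ ω) (abs_nonneg _) (Db _ _ ω)
          _ = 1 := hone
        have hκ1 : (1:ℝ) ≤ κ p q := by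
          simp only [hκ]
          rcases hd with h1 | h1 | h1 | h1 <;> rw [if_pos h1] <;>
            linarith [e (p.1 = q.1) inferInstance, e (p.1 = q.2) inferInstance,
              e (p.2 = q.1) inferInstance, e (p.2 = q.2) inferInstance]
        linarith
      · push_neg at hd
        obtain ⟨h1, h2, h3, h4⟩ := hd
        have hpair : IndepFun (fun ω => (Ξ p.1 ω, Ξ p.2 ω)) (fun ω => (Ξ q.1 ω, Ξ q.2 ω)) P :=
          hindep.indepFun_prodMk_prodMk hmeas p.1 p.2 q.1 q.2 h1 h2 h3 h4
        have hDind : IndepFun (D p.1 p.2) (D q.1 q.2) P :=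
          hpair.comp (φ := fun x : E' × E' => h x - c p.1 p.2)
            (ψ := fun x : E' × E' => h x - c q.1 q.2)
            (hh.sub measurable_const) (hh.sub measurable_const)
        have hz : (∫ ω, D p.1 p.2 ω * D q.1 q.2 ω ∂P)
            = (∫ ω, D p.1 p.2 ω ∂P) * (∫ ω, D q.1 q.2 ω ∂P) :=
          hDind.integral_mul_eq_mul_integral (Dint p.1 p.2).1 (Dint q.1 q.2).1
        rw [hz, Dzero, Dzero, mul_zero]
        simp only [hκ]
        linarith [e (p.1 = q.1) inferInstance, e (p.1 = q.2) inferInstance,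
          e (p.2 = q.1) inferInstance, e (p.2 = q.2) inferInstance]
    have hcnt1 : ∀ a, a ∈ range n →
        (∑ q ∈ range n ×ˢ range n, (if a = q.1 then (1:ℝ) else 0)) = n := by
      intro a ha
      rw [Finset.sum_product]
      have hrow : ∀ x ∈ range n, (∑ _y ∈ range n, (if a = x then (1:ℝ) else 0))
          = if a = x then (n:ℝ) else 0 := by
        intro x _; split <;> simp
      rw [Finset.sum_congr rfl hrow, Finset.sum_ite_eq]
      simp [ha]
    have hcnt2 : ∀ a, a ∈ range n →
        (∑ q ∈ range n ×ˢ range n, (if a = q.2 then (1:ℝ) else 0)) = n := by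
      intro a ha
      rw [Finset.sum_product]
      have hrow : ∀ x ∈ range n, (∑ y ∈ range n, (if a = y then (1:ℝ) else 0)) = 1 := by
        intro x _; rw [Finset.sum_ite_eq]; simp [ha]
      rw [Finset.sum_congr rfl hrow]
      simp
    calc (∑ p ∈ range n ×ˢ range n, ∑ q ∈ range n ×ˢ range n,
            ∫ ω, D p.1 p.2 ω * D q.1 q.2 ω ∂P)
        ≤ ∑ p ∈ range n ×ˢ range n, ∑ q ∈ range n ×ˢ range n, κ p q :=
          Finset.sum_le_sum fun p _ => Finset.sum_le_sum fun q _ => hterm p q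
    _ = ∑ p ∈ range n ×ˢ range n, (4 * (n:ℝ)) := by
        refine Finset.sum_congr rfl fun p hp => ?_
        rw [Finset.mem_product] at hp
        simp only [hκ]
        rw [Finset.sum_add_distrib, Finset.sum_add_distrib, Finset.sum_add_distrib,
          hcnt1 p.1 hp.1, hcnt2 p.1 hp.1, hcnt1 p.2 hp.2, hcnt2 p.2 hp.2]
        ring
    _ = 4 * (n:ℝ)^3 := by
        rw [Finset.sum_const, Finset.card_product, Finset.card_range, nsmul_eq_mul]
        push_cast
        ring
  exact main

lemma ustat_wlln {Ω E' : Type*} [MeasurableSpace Ω] [MeasurableSpace E'] (P : Measure Ω)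
    [IsProbabilityMeasure P] (Ξ : ℕ → Ω → E') (hmeas : ∀ i, Measurable (Ξ i))
    (hindep : iIndepFun Ξ P)
    (hident : ∀ i, IdentDistrib (Ξ i) (Ξ 0) P P)
    (h : E' × E' → ℝ) (hh : Measurable h)
    (hb0 : ∀ x, 0 ≤ h x) (hb1 : ∀ x, h x ≤ 1)
    (m : ℝ) (hm : m = ∫ x, h x ∂((P.map (Ξ 0)).prod (P.map (Ξ 0))))
    (δ : ℝ) (hδ : 0 < δ) :
    Tendsto (fun n => P {ω | δ ≤
      |(∑ i ∈ range n, ∑ j ∈ range n, h (Ξ i ω, Ξ j ω)) / ((n : ℝ)^2) - m|})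
      atTop (𝓝 0) := by
  have Hmeas : ∀ i j : ℕ, Measurable (fun ω => h (Ξ i ω, Ξ j ω)) :=
    fun i j => hh.comp ((hmeas i).prodMk (hmeas j))
  have Hb : ∀ (i j : ℕ) ω, |h (Ξ i ω, Ξ j ω)| ≤ 1 :=
    fun i j ω => abs_le.mpr ⟨by linarith [hb0 (Ξ i ω, Ξ j ω)], hb1 _⟩
  have Hint : ∀ i j : ℕ, Integrable (fun ω => h (Ξ i ω, Ξ j ω)) P :=
    fun i j => bdd_integrable P _ (Hmeas i j) 1 (Hb i j)
  have hone : (∫ (_ : Ω), (1:ℝ) ∂P) = 1 := by simp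
  set c : ℕ → ℕ → ℝ := fun i j => ∫ ω, h (Ξ i ω, Ξ j ω) ∂P with hc
  have hc0 : ∀ i j, 0 ≤ c i j := fun i j => integral_nonneg fun ω => hb0 _
  have hc1 : ∀ i j, c i j ≤ 1 := by
    intro i j
    calc c i j ≤ ∫ (_ : Ω), (1:ℝ) ∂P :=
      integral_mono (Hint i j) (integrable_const 1) fun ω => hb1 _
    _ = 1 := hone
  have hcm : ∀ i j : ℕ, i ≠ j → c i j = m := by
    intro i j hne
    have hind : IndepFun (Ξ i) (Ξ j) P := hindep.indepFun hne
    have hmap : P.map (fun ω => (Ξ i ω, Ξ j ω)) = (P.map (Ξ i)).prod (P.map (Ξ j)) :=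
      (indepFun_iff_map_prod_eq_prod_map_map (hmeas i).aemeasurable
        (hmeas j).aemeasurable).mp hind
    have hci : c i j = ∫ x, h x ∂(P.map (fun ω => (Ξ i ω, Ξ j ω))) := by
      rw [integral_map ((hmeas i).prodMk (hmeas j)).aemeasurable hh.aestronglyMeasurable]
    rw [hci, hmap, (hident i).map_eq, (hident j).map_eq, hm]
  have hm0 : 0 ≤ m := (hcm 0 1 (by norm_num)) ▸ hc0 0 1
  have hm1 : m ≤ 1 := (hcm 0 1 (by norm_num)) ▸ hc1 0 1
  set T : ℕ → Ω → ℝ := fun n ω =>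
    (∑ i ∈ range n, ∑ j ∈ range n, h (Ξ i ω, Ξ j ω)) / ((n : ℝ)^2) with hT
  set Ec : ℕ → ℝ := fun n => (∑ i ∈ range n, ∑ j ∈ range n, c i j) / ((n : ℝ)^2) with hEc
  -- bias bound
  have hbias : ∀ n : ℕ, 1 ≤ n → |Ec n - m| ≤ 1 / (n : ℝ) := by
    intro n hn
    have hn0 : (0:ℝ) < (n:ℝ) := by exact_mod_cast hn
    have hdiag : (∑ i ∈ range n, ∑ j ∈ range n, (c i j - m)) = ∑ i ∈ range n, (c i i - m) := by
      refine Finset.sum_congr rfl fun i hi => ?_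
      have hrow : ∀ j ∈ range n, c i j - m = if i = j then c i i - m else 0 := by
        intro j hj
        by_cases hij : i = j
        · subst hij; simp
        · rw [if_neg hij, hcm i j hij, sub_self]
      rw [Finset.sum_congr rfl hrow, Finset.sum_ite_eq]
      simp [hi]
    have hsum : (∑ i ∈ range n, ∑ j ∈ range n, c i j) - (n:ℝ)^2 * m
        = ∑ i ∈ range n, (c i i - m) := by
      rw [← hdiag]
      simp only [Finset.sum_sub_distrib, Finset.sum_const, Finset.card_range, nsmul_eq_mul]
      push_cast
      ring
    have habs : |∑ i ∈ range n, (c i i - m)| ≤ (n : ℝ) := by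
      calc |∑ i ∈ range n, (c i i - m)| ≤ ∑ i ∈ range n, |c i i - m| :=
        Finset.abs_sum_le_sum_abs _ _
      _ ≤ ∑ _i ∈ range n, (1:ℝ) := by
          refine Finset.sum_le_sum fun i _ => ?_
          rw [abs_le]
          constructor <;> nlinarith [hc0 i i, hc1 i i]
      _ = (n : ℝ) := by simp
    have : Ec n - m = (∑ i ∈ range n, (c i i - m)) / (n:ℝ)^2 := by
      rw [← hsum, hEc]
      field_simp
    rw [this, abs_div, abs_of_pos (by positivity : (0:ℝ) < (n:ℝ)^2)]
    rw [div_le_div_iff₀ (by positivity) hn0]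
    calc |∑ i ∈ range n, (c i i - m)| * (n:ℝ) ≤ (n:ℝ) * (n:ℝ) := by
          exact mul_le_mul_of_nonneg_right habs (le_of_lt hn0)
    _ = 1 * (n:ℝ)^2 := by ring
  -- Chebyshev bound
  have hcheb : ∀ n : ℕ, 1 ≤ n →
      P {ω | δ/2 ≤ |T n ω - Ec n|} ≤ ENNReal.ofReal (16 / (δ^2 * n)) := by
    intro n hn
    have hn0 : (0:ℝ) < (n:ℝ) := by exact_mod_cast hn
    set f : Ω → ℝ := fun ω => (T n ω - Ec n)^2 with hf
    have hfmeas : Measurable f := by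
      apply Measurable.pow_const
      apply Measurable.sub _ measurable_const
      apply Measurable.div_const
      exact Finset.measurable_sum _ fun i _ => Finset.measurable_sum _ fun j _ => Hmeas i j
    have hTb : ∀ ω, |T n ω| ≤ 1 := by
      intro ω
      rw [hT]
      simp only []
      rw [abs_div, abs_of_pos (by positivity : (0:ℝ) < (n:ℝ)^2), div_le_one (by positivity)]
      calc |∑ i ∈ range n, ∑ j ∈ range n, h (Ξ i ω, Ξ j ω)|
          ≤ ∑ i ∈ range n, |∑ j ∈ range n, h (Ξ i ω, Ξ j ω)| := Finset.abs_sum_le_sum_abs _ _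
      _ ≤ ∑ i ∈ range n, ∑ j ∈ range n, |h (Ξ i ω, Ξ j ω)| :=
          Finset.sum_le_sum fun i _ => Finset.abs_sum_le_sum_abs _ _
      _ ≤ ∑ _i ∈ range n, ∑ _j ∈ range n, (1:ℝ) :=
          Finset.sum_le_sum fun i _ => Finset.sum_le_sum fun j _ => Hb i j ω
      _ = (n:ℝ)^2 := by simp; ring
    have hEcb : |Ec n| ≤ 1 := by
      rw [hEc]
      simp only []
      rw [abs_div, abs_of_pos (by positivity : (0:ℝ) < (n:ℝ)^2), div_le_one (by positivity)]
      calc |∑ i ∈ range n, ∑ j ∈ range n, c i j|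
          ≤ ∑ i ∈ range n, ∑ j ∈ range n, |c i j| := by
            refine le_trans (Finset.abs_sum_le_sum_abs _ _) ?_
            exact Finset.sum_le_sum fun i _ => Finset.abs_sum_le_sum_abs _ _
      _ ≤ ∑ _i ∈ range n, ∑ _j ∈ range n, (1:ℝ) := by
            refine Finset.sum_le_sum fun i _ => Finset.sum_le_sum fun j _ => ?_
            rw [abs_le]; constructor <;> nlinarith [hc0 i j, hc1 i j]
      _ = (n:ℝ)^2 := by simp; ring
    have hfb : ∀ ω, |f ω| ≤ 4 := by
      intro ω
      rw [hf]
      simp only []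
      rw [abs_of_nonneg (sq_nonneg _)]
      nlinarith [hTb ω, hEcb, abs_nonneg (T n ω), abs_nonneg (Ec n),
        le_abs_self (T n ω), neg_abs_le (T n ω), le_abs_self (Ec n), neg_abs_le (Ec n)]
    have hfint : Integrable f P := bdd_integrable P f hfmeas 4 hfb
    -- ∫ f ≤ 4 / n
    have hfint_bound : (∫ ω, f ω ∂P) ≤ 4 / (n:ℝ) := by
      have hrw : ∀ ω, f ω
          = (∑ p ∈ range n ×ˢ range n, (h (Ξ p.1 ω, Ξ p.2 ω) - c p.1 p.2))^2 / ((n:ℝ)^4) := by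
        intro ω
        rw [hf]
        simp only []
        have h1 : T n ω - Ec n
            = (∑ p ∈ range n ×ˢ range n, (h (Ξ p.1 ω, Ξ p.2 ω) - c p.1 p.2)) / ((n:ℝ)^2) := by
          rw [hT, hEc]
          simp only []
          rw [div_sub_div_same]
          congr 1
          rw [Finset.sum_sub_distrib]
          congr 1
          · exact (Finset.sum_product' (s := range n) (t := range n)
              (f := fun i j => h (Ξ i ω, Ξ j ω))).symm
          · exact (Finset.sum_product' (s := range n) (t := range n)
              (f := fun i j => c i j)).symm
        rw [h1, div_pow]
        congr 1
        ring
      rw [integral_congr_ae (Filter.Eventually.of_forall hrw), integral_div]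
      rw [div_le_div_iff₀ (by positivity) (by positivity : (0:ℝ) < (n:ℝ))]
      calc (∫ ω, (∑ p ∈ range n ×ˢ range n, (h (Ξ p.1 ω, Ξ p.2 ω) - c p.1 p.2))^2 ∂P) * (n:ℝ)
          ≤ (4 * (n:ℝ)^3) * (n:ℝ) := by
            refine mul_le_mul_of_nonneg_right ?_ (le_of_lt hn0)
            exact ustat_moment P Ξ hmeas hindep h hh hb0 hb1 c (fun i j => rfl) n
      _ = 4 * (n:ℝ)^4 := by ring
    -- Markov
    have hmarkov := mul_meas_ge_le_integral_of_nonneg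
      (Filter.Eventually.of_forall fun ω => sq_nonneg (T n ω - Ec n)) hfint ((δ/2)^2)
    have hsub : {ω | δ/2 ≤ |T n ω - Ec n|} ⊆ {ω | (δ/2)^2 ≤ f ω} := by
      intro ω hω
      simp only [Set.mem_setOf_eq] at hω ⊢
      rw [hf]
      simp only []
      calc (δ/2)^2 ≤ |T n ω - Ec n|^2 := by
            exact pow_le_pow_left₀ (by positivity) hω 2
      _ = (T n ω - Ec n)^2 := sq_abs _
    have hmeasle : P {ω | δ/2 ≤ |T n ω - Ec n|} ≤ P {ω | (δ/2)^2 ≤ f ω} := measure_mono hsub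
    have htoReal : (P {ω | (δ/2)^2 ≤ f ω}).toReal ≤ 16 / (δ^2 * n) := by
      have hδ2 : (0:ℝ) < (δ/2)^2 := by positivity
      have := le_trans hmarkov hfint_bound
      rw [← le_div_iff₀' hδ2] at this
      calc (P {ω | (δ/2)^2 ≤ f ω}).toReal ≤ 4 / (n:ℝ) / (δ/2)^2 := this
      _ = 16 / (δ^2 * n) := by field_simp; ring
    calc P {ω | δ/2 ≤ |T n ω - Ec n|} ≤ P {ω | (δ/2)^2 ≤ f ω} := hmeasle
    _ ≤ ENNReal.ofReal (16 / (δ^2 * n)) := by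
        rw [← ENNReal.ofReal_toReal (measure_ne_top P _)]
        exact ENNReal.ofReal_le_ofReal htoReal
  -- choose N₀
  obtain ⟨N₀, hN₀1, hN₀2⟩ : ∃ N₀ : ℕ, 1 ≤ N₀ ∧ ∀ n : ℕ, N₀ ≤ n → 1 / (n:ℝ) ≤ δ/2 := by
    refine ⟨max 1 ⌈2/δ⌉₊, le_max_left _ _, fun n hn => ?_⟩
    have h1 : (1:ℕ) ≤ n := le_trans (le_max_left _ _) hn
    have hn0 : (0:ℝ) < (n:ℝ) := by exact_mod_cast h1
    have h2 : (2/δ : ℝ) ≤ (n:ℝ) := by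
      calc (2/δ : ℝ) ≤ (⌈2/δ⌉₊ : ℝ) := Nat.le_ceil _
      _ ≤ (n : ℝ) := by exact_mod_cast le_trans (le_max_right 1 _) hn
    rw [div_le_iff₀ hn0]
    rw [div_le_iff₀ hδ] at h2
    linarith
  -- final squeeze
  have hub : Tendsto (fun n : ℕ => ENNReal.ofReal (16 / (δ^2 * n))) atTop (𝓝 0) := by
    have h1 : Tendsto (fun n : ℕ => (16/δ^2) / (n:ℝ)) atTop (𝓝 0) :=
      tendsto_const_div_atTop_nhds_zero_nat _
    have h2 : (fun n : ℕ => ENNReal.ofReal (16 / (δ^2 * n)))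
        = fun n : ℕ => ENNReal.ofReal ((16/δ^2) / (n:ℝ)) := by
      funext n; congr 1; field_simp
    rw [h2, ← ENNReal.ofReal_zero]
    exact (ENNReal.continuous_ofReal.tendsto 0).comp h1
  refine tendsto_of_tendsto_of_tendsto_of_le_of_le' tendsto_const_nhds hub ?_ ?_
  · exact Filter.Eventually.of_forall fun n => zero_le
  · filter_upwards [Filter.eventually_ge_atTop N₀] with n hn
    have h1n : 1 ≤ n := le_trans hN₀1 hn
    have hsubset : {ω | δ ≤ |T n ω - m|} ⊆ {ω | δ/2 ≤ |T n ω - Ec n|} := by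
      intro ω hω
      simp only [Set.mem_setOf_eq] at hω ⊢
      have h3 := hbias n h1n
      have h4 := hN₀2 n hn
      have h5 := abs_sub_le (T n ω) (Ec n) m
      linarith
    exact le_trans (measure_mono hsubset) (hcheb n h1n)

lemma m_value {Ω : Type*} [MeasurableSpace Ω] (P : Measure Ω) [IsProbabilityMeasure P]
    (d : ℕ) (Y1 Y0 W : Ω → ℝ) (X : Ω → Fin d → ℝ)
    (hmeas : Measurable (fun ω => (Y1 ω, Y0 ω, W ω, X ω)))
    (hbin : ∀ ω, W ω = 0 ∨ W ω = 1)
    (habs1 : ∀ x : ℝ, (P.map Y1) {x} = 0)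
    (π : ℝ) (hπ0 : 0 ≤ π)
    (hrand : IndepFun W (fun ω => (Y1 ω, Y0 ω, X ω)) P)
    (hintensity : P {ω | W ω = 1} = ENNReal.ofReal π) :
    (∫ x : (ℝ × ℝ × ℝ × (Fin d → ℝ)) × (ℝ × ℝ × ℝ × (Fin d → ℝ)),
        (if x.1.2.2.1 = 1 then (1:ℝ) else 0) *
        (if x.2.1 * x.2.2.2.1 + x.2.2.1 * (1 - x.2.2.2.1)
            ≤ x.1.1 * x.1.2.2.1 + x.1.2.1 * (1 - x.1.2.2.1) then (1:ℝ) else 0)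
      ∂((P.map (fun ω => (Y1 ω, Y0 ω, W ω, X ω))).prod
          (P.map (fun ω => (Y1 ω, Y0 ω, W ω, X ω)))))
    = π * (π/2 + (1-π) * (((P.map Y1).prod (P.map Y0)) {p : ℝ × ℝ | p.2 ≤ p.1}).toReal) := by
  set E' := ℝ × ℝ × ℝ × (Fin d → ℝ) with hE'
  set Ξ : Ω → E' := fun ω => (Y1 ω, Y0 ω, W ω, X ω) with hΞ
  have mY1 : Measurable Y1 := measurable_fst.comp hmeas
  have mY0 : Measurable Y0 := (measurable_fst.comp (measurable_snd.comp hmeas))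
  have mW : Measurable W :=
    (measurable_fst.comp (measurable_snd.comp (measurable_snd.comp hmeas)))
  set ν : Measure E' := P.map Ξ with hν
  set μ1 : Measure ℝ := P.map Y1 with hμ1
  set μ0 : Measure ℝ := P.map Y0 with hμ0
  haveI : IsProbabilityMeasure ν := Measure.isProbabilityMeasure_map hmeas.aemeasurable
  haveI : IsProbabilityMeasure μ1 := Measure.isProbabilityMeasure_map mY1.aemeasurable
  haveI : IsProbabilityMeasure μ0 := Measure.isProbabilityMeasure_map mY0.aemeasurable
  set yv : E' → ℝ := fun a => a.1 * a.2.2.1 + a.2.1 * (1 - a.2.2.1) with hyv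
  have myv : Measurable yv := by
    apply Measurable.add
    · exact measurable_fst.mul (measurable_fst.comp (measurable_snd.comp measurable_snd))
    · exact (measurable_fst.comp measurable_snd).mul
        (measurable_const.sub (measurable_fst.comp (measurable_snd.comp measurable_snd)))
  set h : E' × E' → ℝ := fun x =>
    (if x.1.2.2.1 = 1 then (1:ℝ) else 0) * (if yv x.2 ≤ yv x.1 then 1 else 0) with hh
  have hwIset : MeasurableSet {x : E' × E' | x.1.2.2.1 = 1} := by
    have : Measurable (fun x : E' × E' => x.1.2.2.1) :=
      measurable_fst.comp (measurable_snd.comp (measurable_snd.comp measurable_fst))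
    exact this (measurableSet_singleton 1)
  have hleset : MeasurableSet {x : E' × E' | yv x.2 ≤ yv x.1} :=
    measurableSet_le (myv.comp measurable_snd) (myv.comp measurable_fst)
  have hhmeas : Measurable h := by
    apply Measurable.mul
    · exact Measurable.ite hwIset measurable_const measurable_const
    · exact Measurable.ite hleset measurable_const measurable_const
  have hb0 : ∀ x, 0 ≤ h x := by
    intro x; rw [hh]; apply mul_nonneg <;> split <;> norm_num
  have hb1 : ∀ x, h x ≤ 1 := by
    intro x; rw [hh]
    exact mul_le_one₀ (by split <;> norm_num) (by split <;> norm_num) (by split <;> norm_num)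
  have hhb : ∀ x, |h x| ≤ 1 := fun x => abs_le.mpr ⟨by linarith [hb0 x], hb1 x⟩
  -- cdfs
  set G : ℝ → ℝ := fun t => (ν {b : E' | yv b ≤ t}).toReal with hG
  have hGmono : Monotone G := by
    intro s t hst
    exact ENNReal.toReal_mono (measure_ne_top _ _)
      (measure_mono (fun b hb => le_trans hb hst))
  have hGmeas : Measurable G := hGmono.measurable
  have hG0 : ∀ t, 0 ≤ G t := fun t => ENNReal.toReal_nonneg
  have hG1 : ∀ t, G t ≤ 1 := fun t => by
    rw [hG]
    have : ν {b : E' | yv b ≤ t} ≤ 1 := prob_le_one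
    calc (ν {b : E' | yv b ≤ t}).toReal ≤ (1 : ℝ≥0∞).toReal :=
      ENNReal.toReal_mono (by norm_num) this
    _ = 1 := by norm_num
  set F1 : ℝ → ℝ := fun t => (μ1 (Set.Iic t)).toReal with hF1
  set F0 : ℝ → ℝ := fun t => (μ0 (Set.Iic t)).toReal with hF0
  have hF1mono : Monotone F1 := fun s t hst =>
    ENNReal.toReal_mono (measure_ne_top _ _) (measure_mono (Set.Iic_subset_Iic.mpr hst))
  have hF0mono : Monotone F0 := fun s t hst =>
    ENNReal.toReal_mono (measure_ne_top _ _) (measure_mono (Set.Iic_subset_Iic.mpr hst))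
  have hF1meas : Measurable F1 := hF1mono.measurable
  have hF0meas : Measurable F0 := hF0mono.measurable
  have prob_toReal_le_one : ∀ (q : ℝ≥0∞), q ≤ 1 → |q.toReal| ≤ 1 := by
    intro q hq
    rw [abs_of_nonneg ENNReal.toReal_nonneg]
    calc q.toReal ≤ (1 : ℝ≥0∞).toReal := ENNReal.toReal_mono (by norm_num) hq
    _ = 1 := by norm_num
  have hF1b : ∀ t, |F1 t| ≤ 1 := fun t => prob_toReal_le_one _ prob_le_one
  have hF0b : ∀ t, |F0 t| ≤ 1 := fun t => prob_toReal_le_one _ prob_le_one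
  have hπle1 : ENNReal.ofReal π ≤ 1 := hintensity ▸ prob_le_one
  -- inner integral
  have hinner : ∀ t : ℝ, (∫ b, (if yv b ≤ t then (1:ℝ) else 0) ∂ν) = G t := by
    intro t
    have hset : MeasurableSet {b : E' | yv b ≤ t} := measurableSet_le myv measurable_const
    have heq : (fun b => if yv b ≤ t then (1:ℝ) else 0)
        = Set.indicator {b : E' | yv b ≤ t} (fun _ => (1:ℝ)) := by
      funext b; by_cases hb : yv b ≤ t <;> simp [Set.indicator, hb]
    rw [heq, integral_indicator_const (1:ℝ) hset, smul_eq_mul, mul_one]; rfl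
  -- Step A
  have hint : Integrable h (ν.prod ν) := bdd_integrable _ h hhmeas 1 hhb
  have stepA : (∫ x, h x ∂(ν.prod ν))
      = ∫ a, (if a.2.2.1 = 1 then (1:ℝ) else 0) * G (yv a) ∂ν := by
    rw [integral_prod _ hint]
    refine integral_congr_ae (Filter.Eventually.of_forall fun a => ?_)
    calc (∫ b, h (a, b) ∂ν)
        = ∫ b, (if a.2.2.1 = 1 then (1:ℝ) else 0) * (if yv b ≤ yv a then (1:ℝ) else 0) ∂ν :=
          rfl
    _ = (if a.2.2.1 = 1 then (1:ℝ) else 0) * ∫ b, (if yv b ≤ yv a then (1:ℝ) else 0) ∂ν :=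
          integral_const_mul _ _
    _ = (if a.2.2.1 = 1 then (1:ℝ) else 0) * G (yv a) := by rw [hinner (yv a)]
  -- Step A'
  have hintegrand_meas :
      Measurable (fun a : E' => (if a.2.2.1 = 1 then (1:ℝ) else 0) * G (yv a)) := by
    apply Measurable.mul
    · refine Measurable.ite ?_ measurable_const measurable_const
      have : Measurable (fun a : E' => a.2.2.1) :=
        measurable_fst.comp (measurable_snd.comp measurable_snd)
      exact this (measurableSet_singleton 1)
    · exact hGmeas.comp myv
  have stepA' : (∫ a, (if a.2.2.1 = 1 then (1:ℝ) else 0) * G (yv a) ∂ν)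
      = ∫ ω, (if W ω = 1 then (1:ℝ) else 0) * G (Y1 ω) ∂P := by
    rw [hν, integral_map hmeas.aemeasurable hintegrand_meas.aestronglyMeasurable]
    refine integral_congr_ae (Filter.Eventually.of_forall fun ω => ?_)
    show (if W ω = 1 then (1:ℝ) else 0) * G (Y1 ω * W ω + Y0 ω * (1 - W ω))
        = (if W ω = 1 then (1:ℝ) else 0) * G (Y1 ω)
    rcases hbin ω with hw | hw
    · rw [hw]; norm_num
    · rw [hw]; norm_num
  -- Step C
  have hφmeas : Measurable (fun t : ℝ => if t = 1 then (1:ℝ) else 0) :=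
    Measurable.ite (measurableSet_singleton 1) measurable_const measurable_const
  have hindWY1 : IndepFun (fun ω => if W ω = 1 then (1:ℝ) else 0) (fun ω => G (Y1 ω)) P :=
    hrand.comp hφmeas (hGmeas.comp measurable_fst)
  have hint1 : Integrable (fun ω => if W ω = 1 then (1:ℝ) else 0) P := by
    refine bdd_integrable P _ (hφmeas.comp mW) 1 fun ω => ?_
    split <;> norm_num
  have hint2 : Integrable (fun ω => G (Y1 ω)) P := by
    refine bdd_integrable P _ (hGmeas.comp mY1) 1 fun ω => ?_
    rw [abs_of_nonneg (hG0 _)]; exact hG1 _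
  have stepC : (∫ ω, (if W ω = 1 then (1:ℝ) else 0) * G (Y1 ω) ∂P)
      = (∫ ω, (if W ω = 1 then (1:ℝ) else 0) ∂P) * ∫ ω, G (Y1 ω) ∂P :=
    hindWY1.integral_mul_eq_mul_integral hint1.1 hint2.1
  have hEW : (∫ ω, (if W ω = 1 then (1:ℝ) else 0) ∂P) = π := by
    have heq : (fun ω => if W ω = 1 then (1:ℝ) else 0)
        = Set.indicator (W ⁻¹' {1}) (fun _ => (1:ℝ)) := by
      funext ω; by_cases hw : W ω = 1 <;> simp [Set.indicator, hw]
    rw [heq, integral_indicator_const (1:ℝ) (mW (measurableSet_singleton 1)),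
      smul_eq_mul, mul_one, show (W ⁻¹' {1} : Set Ω) = {ω | W ω = 1} from rfl,
      measureReal_def, hintensity, ENNReal.toReal_ofReal hπ0]
  -- Step D
  have stepD : ∀ t : ℝ, G t = π * F1 t + (1 - π) * F0 t := by
    intro t
    have hset : MeasurableSet {b : E' | yv b ≤ t} := measurableSet_le myv measurable_const
    have hGmap : ν {b : E' | yv b ≤ t} = P {ω | Y1 ω * W ω + Y0 ω * (1 - W ω) ≤ t} := by
      rw [hν, Measure.map_apply hmeas hset]
      rfl
    have hsplit : {ω | Y1 ω * W ω + Y0 ω * (1 - W ω) ≤ t}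
        = ({ω | W ω = 1} ∩ {ω | Y1 ω ≤ t}) ∪ ({ω | W ω = 1}ᶜ ∩ {ω | Y0 ω ≤ t}) := by
      ext ω
      simp only [Set.mem_setOf_eq, Set.mem_union, Set.mem_inter_iff, Set.mem_compl_iff]
      rcases hbin ω with hw | hw
      · rw [hw]; norm_num
      · rw [hw]; norm_num
    have hdisj : Disjoint ({ω | W ω = 1} ∩ {ω | Y1 ω ≤ t})
        (({ω | W ω = 1}ᶜ ∩ {ω | Y0 ω ≤ t})) :=
      Set.disjoint_left.mpr fun ω hω1 hω2 => hω2.1 hω1.1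
    have hmeas2 : MeasurableSet (({ω | W ω = 1}ᶜ ∩ {ω | Y0 ω ≤ t})) :=
      ((mW (measurableSet_singleton 1)).compl).inter (mY0 measurableSet_Iic)
    have hindY1 : IndepFun W Y1 P := hrand.comp measurable_id measurable_fst
    have hindY0 : IndepFun W Y0 P :=
      hrand.comp measurable_id (measurable_fst.comp measurable_snd)
    have h1 : P ({ω | W ω = 1} ∩ {ω | Y1 ω ≤ t})
        = ENNReal.ofReal π * μ1 (Set.Iic t) := by
      have hmm : P ({ω | W ω = 1} ∩ {ω | Y1 ω ≤ t})
          = P (W ⁻¹' {1}) * P (Y1 ⁻¹' Set.Iic t) :=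
        hindY1.measure_inter_preimage_eq_mul {1} (Set.Iic t)
          (measurableSet_singleton 1) measurableSet_Iic
      rw [hmm, hμ1, Measure.map_apply mY1 measurableSet_Iic]
      congr 1
    have h0 : P (({ω | W ω = 1}ᶜ ∩ {ω | Y0 ω ≤ t}))
        = (1 - ENNReal.ofReal π) * μ0 (Set.Iic t) := by
      have hmm : P ({ω | W ω = 1}ᶜ ∩ {ω | Y0 ω ≤ t})
          = P (W ⁻¹' ({1}ᶜ)) * P (Y0 ⁻¹' Set.Iic t) :=
        hindY0.measure_inter_preimage_eq_mul ({1}ᶜ) (Set.Iic t)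
          (measurableSet_singleton 1).compl measurableSet_Iic
      rw [hmm, hμ0, Measure.map_apply mY0 measurableSet_Iic]
      congr 1
      calc P (W ⁻¹' ({1}ᶜ : Set ℝ)) = P (({ω | W ω = 1})ᶜ) := rfl
      _ = 1 - P {ω | W ω = 1} := prob_compl_eq_one_sub (mW (measurableSet_singleton 1))
      _ = 1 - ENNReal.ofReal π := by rw [hintensity]
    rw [hG]
    simp only []
    rw [hGmap, hsplit, measure_union hdisj hmeas2, h1, h0]
    rw [ENNReal.toReal_add
        (ENNReal.mul_ne_top ENNReal.ofReal_ne_top (measure_ne_top _ _))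
        (ENNReal.mul_ne_top (ENNReal.sub_ne_top ENNReal.one_ne_top) (measure_ne_top _ _)),
      ENNReal.toReal_mul, ENNReal.toReal_mul, ENNReal.toReal_ofReal hπ0,
      ENNReal.toReal_sub_of_le hπle1 (by norm_num), ENNReal.toReal_one,
      ENNReal.toReal_ofReal hπ0]
  -- Step E
  have hprodapply : ∀ (μa μb : Measure ℝ) [SFinite μb],
      (μa.prod μb) {p : ℝ × ℝ | p.2 ≤ p.1} = ∫⁻ t, μb (Set.Iic t) ∂μa := by
    intro μa μb _
    rw [Measure.prod_apply (measurableSet_le measurable_snd measurable_fst)]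
    rfl
  have hE1 : (∫ t, F1 t ∂μ1) = ((μ1.prod μ1) {p : ℝ × ℝ | p.2 ≤ p.1}).toReal := by
    rw [hprodapply μ1 μ1, hF1, ← integral_toReal]
    · exact (Monotone.measurable fun s t hst =>
        measure_mono (Set.Iic_subset_Iic.mpr hst)).aemeasurable
    · exact Filter.Eventually.of_forall fun t => measure_lt_top _ _
  have hE0 : (∫ t, F0 t ∂μ1) = ((μ1.prod μ0) {p : ℝ × ℝ | p.2 ≤ p.1}).toReal := by
    rw [hprodapply μ1 μ0, hF0, ← integral_toReal]
    · exact (Monotone.measurable fun s t hst =>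
        measure_mono (Set.Iic_subset_Iic.mpr hst)).aemeasurable
    · exact Filter.Eventually.of_forall fun t => measure_lt_top _ _
  have hhalf : ((μ1.prod μ1) {p : ℝ × ℝ | p.2 ≤ p.1}).toReal = 1/2 := by
    rw [prod_le_half μ1 habs1]
    norm_num
  have hEG : (∫ ω, G (Y1 ω) ∂P)
      = π * (1/2) + (1-π) * (((μ1.prod μ0)) {p : ℝ × ℝ | p.2 ≤ p.1}).toReal := by
    have hmapint : (∫ ω, G (Y1 ω) ∂P) = ∫ t, G t ∂μ1 := by
      rw [hμ1, integral_map mY1.aemeasurable hGmeas.aestronglyMeasurable]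
    rw [hmapint]
    have hcong : (∫ t, G t ∂μ1) = ∫ t, (π * F1 t + (1 - π) * F0 t) ∂μ1 :=
      integral_congr_ae (Filter.Eventually.of_forall stepD)
    rw [hcong]
    have hintF1 : Integrable F1 μ1 := bdd_integrable μ1 F1 hF1meas 1 hF1b
    have hintF0 : Integrable F0 μ1 := bdd_integrable μ1 F0 hF0meas 1 hF0b
    rw [integral_add (hintF1.const_mul π) (hintF0.const_mul (1 - π)),
      integral_const_mul, integral_const_mul, hE1, hE0, hhalf]
  show (∫ x, h x ∂(ν.prod ν))
      = π * (π/2 + (1-π) * ((μ1.prod μ0) {p : ℝ × ℝ | p.2 ≤ p.1}).toReal)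
  rw [stepA, stepA', stepC, hEW, hEG]
  ring



/-- Theorem 1 (rank-OLS without covariates under random assignment): under SUTVA,
absolute continuity of the potential outcome distributions, and completely random
assignment with `P(W_i = 1 | Y_i(1), Y_i(0), X_i) = π ∈ (0,1)`, the OLS slope on `W_i`
in the regression of the normalized rank `R^Y_i / n` on a constant and `W_i` converges
in probability to the rank-ATE `τ_r(F_{Y(1)}, F_{Y(0)})`. -/
theorem rankOLS_binary_randomized
    {Ω : Type*} [MeasurableSpace Ω] (P : Measure Ω) [IsProbabilityMeasure P]
    (d : ℕ) (Y1 Y0 W Y : ℕ → Ω → ℝ) (X : ℕ → Ω → Fin d → ℝ)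
    -- measurability of the data
    (hmeas : ∀ i, Measurable (fun ω => (Y1 i ω, Y0 i ω, W i ω, X i ω)))
    -- the treatment is binary
    (hbin : ∀ i ω, W i ω = 0 ∨ W i ω = 1)
    -- the data are i.i.d. across units
    (hindep : iIndepFun
      (fun i ω => (Y1 i ω, Y0 i ω, W i ω, X i ω)) P)
    (hident : ∀ i, IdentDistrib (fun ω => (Y1 i ω, Y0 i ω, W i ω, X i ω))
      (fun ω => (Y1 0 ω, Y0 0 ω, W 0 ω, X 0 ω)) P P)
    -- Assumption 1 (SUTVA)
    (hSUTVA : ∀ i ω, Y i ω = Y1 i ω * W i ω + Y0 i ω * (1 - W i ω))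
    -- Assumption 2 (absolutely continuous potential outcome distributions)
    (habs1 : P.map (Y1 0) ≪ MeasureTheory.volume)
    (habs0 : P.map (Y0 0) ≪ MeasureTheory.volume)
    -- Assumption 3 (completely random assignment with marginal intensity π ∈ (0,1))
    (π : ℝ) (hπ : π ∈ Set.Ioo (0 : ℝ) 1)
    (hrand : ∀ i, IndepFun (W i) (fun ω => (Y1 i ω, Y0 i ω, X i ω)) P)
    (hintensity : ∀ i, P {ω | W i ω = 1} = ENNReal.ofReal π) :
    TendstoInMeasure P
      (fun n ω => olsSlope n (fun i => W i ω)
        (fun i => (∑ j ∈ Finset.range n, if Y j ω ≤ Y i ω then (1 : ℝ) else 0) / n))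
      atTop
      (fun _ => rankATE (P.map (Y1 0)) (P.map (Y0 0))) := by
  obtain ⟨hπ0, hπ1⟩ := hπ
  -- projections and measurability
  have mY1 : ∀ i, Measurable (Y1 i) := fun i => measurable_fst.comp (hmeas i)
  have mY0 : ∀ i, Measurable (Y0 i) :=
    fun i => measurable_fst.comp (measurable_snd.comp (hmeas i))
  have mW : ∀ i, Measurable (W i) :=
    fun i => measurable_fst.comp (measurable_snd.comp (measurable_snd.comp (hmeas i)))
  have mY : ∀ i, Measurable (Y i) := by
    intro i
    have : Y i = fun ω => Y1 i ω * W i ω + Y0 i ω * (1 - W i ω) := funext (hSUTVA i)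
    rw [this]
    exact ((mY1 i).mul (mW i)).add ((mY0 i).mul (measurable_const.sub (mW i)))
  -- atomlessness of the marginals
  have hat1 : ∀ x : ℝ, (P.map (Y1 0)) {x} = 0 := fun x => habs1 (Real.volume_singleton)
  have hat0 : ∀ x : ℝ, (P.map (Y0 0)) {x} = 0 := fun x => habs0 (Real.volume_singleton)
  -- the kernel
  set h : (ℝ × ℝ × ℝ × (Fin d → ℝ)) × (ℝ × ℝ × ℝ × (Fin d → ℝ)) → ℝ := fun x =>
    (if x.1.2.2.1 = 1 then (1:ℝ) else 0) *
    (if x.2.1 * x.2.2.2.1 + x.2.2.1 * (1 - x.2.2.2.1)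
        ≤ x.1.1 * x.1.2.2.1 + x.1.2.1 * (1 - x.1.2.2.1) then (1:ℝ) else 0) with hhdef
  have myv : Measurable (fun a : ℝ × ℝ × ℝ × (Fin d → ℝ) =>
      a.1 * a.2.2.1 + a.2.1 * (1 - a.2.2.1)) := by
    apply Measurable.add
    · exact measurable_fst.mul (measurable_fst.comp (measurable_snd.comp measurable_snd))
    · exact (measurable_fst.comp measurable_snd).mul
        (measurable_const.sub (measurable_fst.comp (measurable_snd.comp measurable_snd)))
  have hhmeas : Measurable h := by
    apply Measurable.mul
    · refine Measurable.ite ?_ measurable_const measurable_const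
      have : Measurable (fun x : (ℝ × ℝ × ℝ × (Fin d → ℝ)) × (ℝ × ℝ × ℝ × (Fin d → ℝ)) =>
          x.1.2.2.1) :=
        measurable_fst.comp (measurable_snd.comp (measurable_snd.comp measurable_fst))
      exact this (measurableSet_singleton 1)
    · refine Measurable.ite ?_ measurable_const measurable_const
      exact measurableSet_le (myv.comp measurable_snd) (myv.comp measurable_fst)
  have hb0 : ∀ x, 0 ≤ h x := by
    intro x; rw [hhdef]; apply mul_nonneg <;> split <;> norm_num
  have hb1 : ∀ x, h x ≤ 1 := by
    intro x; rw [hhdef]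
    exact mul_le_one₀ (by split <;> norm_num) (by split <;> norm_num) (by split <;> norm_num)
  -- the limit value
  set pb : ℝ := (((P.map (Y1 0)).prod (P.map (Y0 0))) {p : ℝ × ℝ | p.2 ≤ p.1}).toReal with hpb
  set mval : ℝ := π * (π/2 + (1-π) * pb) with hmval
  have hm : mval = ∫ x, h x ∂((P.map (fun ω => (Y1 0 ω, Y0 0 ω, W 0 ω, X 0 ω))).prod
      (P.map (fun ω => (Y1 0 ω, Y0 0 ω, W 0 ω, X 0 ω)))) := by
    rw [hmval, hpb]
    exact (m_value P d (Y1 0) (Y0 0) (W 0) (X 0) (hmeas 0) (hbin 0) hat1 π hπ0.le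
      (hrand 0) (hintensity 0)).symm
  -- U-statistic convergence
  have hUstat : ∀ δ : ℝ, 0 < δ → Tendsto (fun n => P {ω | δ ≤
      |(∑ i ∈ range n, ∑ j ∈ range n,
          h ((Y1 i ω, Y0 i ω, W i ω, X i ω), (Y1 j ω, Y0 j ω, W j ω, X j ω)))
        / ((n : ℝ)^2) - mval|}) atTop (𝓝 0) := by
    intro δ hδ
    exact ustat_wlln P (fun i ω => (Y1 i ω, Y0 i ω, W i ω, X i ω)) hmeas hindep hident
      h hhmeas hb0 hb1 mval hm δ hδ
  -- sample mean of W convergence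
  have hWbar : TendstoInMeasure P
      (fun n ω => (∑ i ∈ range n, W i ω) / (n : ℝ)) atTop (fun _ => π) := by
    have mproj : Measurable (fun a : ℝ × ℝ × ℝ × (Fin d → ℝ) => a.2.2.1) :=
      measurable_fst.comp (measurable_snd.comp measurable_snd)
    have hWint : Integrable (W 0) P := by
      refine bdd_integrable P _ (mW 0) 1 fun ω => ?_
      rcases hbin 0 ω with hw | hw <;> rw [hw] <;> norm_num
    have hWpair : Pairwise (Function.onFun (IndepFun · · P) W) := by
      intro i j hij
      exact (hindep.indepFun hij).comp mproj mproj
    have hWident : ∀ i, IdentDistrib (W i) (W 0) P P := fun i => (hident i).comp mproj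
    have hEW : (∫ ω, W 0 ω ∂P) = π := by
      have heq : (fun ω => W 0 ω) = Set.indicator ((W 0) ⁻¹' {1}) (fun _ => (1:ℝ)) := by
        funext ω
        rcases hbin 0 ω with hw | hw
        · have : ω ∉ (W 0) ⁻¹' ({1} : Set ℝ) := by
            simp only [Set.mem_preimage, Set.mem_singleton_iff, hw]; norm_num
          rw [Set.indicator_of_notMem this, hw]
        · have : ω ∈ (W 0) ⁻¹' ({1} : Set ℝ) := by
            simp only [Set.mem_preimage, Set.mem_singleton_iff, hw]
          rw [Set.indicator_of_mem this, hw]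
      rw [heq, integral_indicator_const (1:ℝ) ((mW 0) (measurableSet_singleton 1)),
        smul_eq_mul, mul_one, show ((W 0) ⁻¹' {1} : Set Ω) = {ω | W 0 ω = 1} from rfl,
        measureReal_def, hintensity 0, ENNReal.toReal_ofReal hπ0.le]
    have hae := strong_law_ae W hWint hWpair hWident
    refine tendstoInMeasure_of_tendsto_ae (fun n => ?_) ?_
    · exact (Measurable.div_const (Finset.measurable_sum _ fun i _ => mW i) _
        ).aestronglyMeasurable
    · rw [hEW] at hae
      filter_upwards [hae] with ω hω
      have : (fun n : ℕ => (∑ i ∈ range n, W i ω) / (n : ℝ))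
          = fun n : ℕ => (n : ℝ)⁻¹ • (∑ i ∈ range n, W i ω) := by
        funext n
        rw [smul_eq_mul, inv_mul_eq_div]
      rw [this]
      exact hω
  -- null set of ties
  have hties : ∀ i j : ℕ, i ≠ j → P {ω | Y i ω = Y j ω} = 0 := by
    intro i j hij
    have hsub : {ω | Y i ω = Y j ω} ⊆
        {ω | Y1 i ω = Y1 j ω} ∪ {ω | Y1 i ω = Y0 j ω}
          ∪ {ω | Y0 i ω = Y1 j ω} ∪ {ω | Y0 i ω = Y0 j ω} := by
      intro ω hω
      simp only [Set.mem_setOf_eq] at hω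
      rw [hSUTVA i ω, hSUTVA j ω] at hω
      simp only [Set.mem_union, Set.mem_setOf_eq]
      rcases hbin i ω with hwi | hwi <;> rcases hbin j ω with hwj | hwj <;>
        rw [hwi, hwj] at hω <;> [skip; skip; skip; skip] <;>
        first
          | (left; left; left; linarith)
          | (left; left; right; linarith)
          | (left; right; linarith)
          | (right; linarith)
    have hid1 : ∀ k : ℕ, ∀ x : ℝ, (P.map (Y1 k)) {x} = 0 := by
      intro k x
      have e : P.map (Y1 k) = P.map (Y1 0) := ((hident k).comp (measurable_fst :
        Measurable fun a : ℝ × ℝ × ℝ × (Fin d → ℝ) => a.1)).map_eq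
      rw [e]
      exact hat1 x
    have hid0 : ∀ k : ℕ, ∀ x : ℝ, (P.map (Y0 k)) {x} = 0 := by
      intro k x
      have e : P.map (Y0 k) = P.map (Y0 0) := ((hident k).comp ((measurable_fst.comp
        measurable_snd) : Measurable fun a : ℝ × ℝ × ℝ × (Fin d → ℝ) => a.2.1)).map_eq
      rw [e]
      exact hat0 x
    have hI := hindep.indepFun hij
    have h11 : P {ω | Y1 i ω = Y1 j ω} = 0 :=
      meas_eq_null P _ _ (mY1 i) (mY1 j)
        (hI.comp measurable_fst measurable_fst) (hid1 j)
    have h10 : P {ω | Y1 i ω = Y0 j ω} = 0 :=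
      meas_eq_null P _ _ (mY1 i) (mY0 j)
        (hI.comp measurable_fst (measurable_fst.comp measurable_snd)) (hid0 j)
    have h01 : P {ω | Y0 i ω = Y1 j ω} = 0 :=
      meas_eq_null P _ _ (mY0 i) (mY1 j)
        (hI.comp (measurable_fst.comp measurable_snd) measurable_fst) (hid1 j)
    have h00 : P {ω | Y0 i ω = Y0 j ω} = 0 :=
      meas_eq_null P _ _ (mY0 i) (mY0 j)
        (hI.comp (measurable_fst.comp measurable_snd)
          (measurable_fst.comp measurable_snd)) (hid0 j)
    exact measure_mono_null hsub
      (measure_union_null (measure_union_null (measure_union_null h11 h10) h01) h00)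
  set Nties : Set Ω := ⋃ (i : ℕ) (j : ℕ) (_ : i ≠ j), {ω | Y i ω = Y j ω} with hNt
  have hNnull : P Nties = 0 :=
    measure_iUnion_null fun i => measure_iUnion_null fun j =>
      measure_iUnion_null fun hij => hties i j hij
  -- pointwise identification of the kernel
  have hpt : ∀ (i j : ℕ) (ω : Ω),
      h ((Y1 i ω, Y0 i ω, W i ω, X i ω), (Y1 j ω, Y0 j ω, W j ω, X j ω))
        = W i ω * (if Y j ω ≤ Y i ω then (1:ℝ) else 0) := by
    intro i j ω
    show (if W i ω = 1 then (1:ℝ) else 0) *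
        (if Y1 j ω * W j ω + Y0 j ω * (1 - W j ω)
            ≤ Y1 i ω * W i ω + Y0 i ω * (1 - W i ω) then (1:ℝ) else 0)
      = W i ω * (if Y j ω ≤ Y i ω then (1:ℝ) else 0)
    rw [← hSUTVA j ω, ← hSUTVA i ω]
    rcases hbin i ω with hw | hw <;> rw [hw] <;> norm_num
  -- main argument
  rw [tendstoInMeasure_iff_dist]
  intro ε hε
  set μ1 : Measure ℝ := P.map (Y1 0) with hμ1
  set μ0 : Measure ℝ := P.map (Y0 0) with hμ0
  set τ : ℝ := rankATE μ1 μ0 with hτdef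
  have hτ : τ = pb - 1/2 := rfl
  set ψ : ℝ × ℝ × ℝ → ℝ := fun x => (x.1 - x.2.1 * x.2.2) / (x.2.1 - x.2.1^2) with hψ
  have hden : π - π^2 ≠ 0 := by nlinarith
  have hψcont : ContinuousAt ψ (mval, π, 1/2) := by
    apply ContinuousAt.div
    · exact (continuous_fst.sub ((continuous_fst.comp continuous_snd).mul
        (continuous_snd.comp continuous_snd))).continuousAt
    · exact ((continuous_fst.comp continuous_snd).sub
        ((continuous_fst.comp continuous_snd).pow 2)).continuousAt
    · exact hden
  have hψval : ψ (mval, π, 1/2) = τ := by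
    rw [hψ, hτ]
    show (mval - π * (1/2)) / (π - π^2) = pb - 1/2
    rw [div_eq_iff hden, hmval]
    ring
  obtain ⟨δ₀, hδ₀pos, hδ₀⟩ := Metric.continuousAt_iff.mp hψcont ε hε
  -- choice of N₁
  obtain ⟨k₁, hk₁⟩ := exists_nat_one_div_lt hδ₀pos
  set N₁ : ℕ := k₁ + 1 with hN₁def
  have hN₁pos : 1 ≤ N₁ := by omega
  have hN₁ : ∀ n : ℕ, N₁ ≤ n → (1 : ℝ) / n < δ₀ := by
    intro n hn
    have h1 : (0:ℝ) < N₁ := by exact_mod_cast hN₁pos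
    have h2 : (N₁ : ℝ) ≤ n := by exact_mod_cast hn
    calc (1:ℝ)/n ≤ 1/N₁ := one_div_le_one_div_of_le h1 h2
    _ < δ₀ := by
        have : ((N₁ : ℝ)) = (k₁ : ℝ) + 1 := by rw [hN₁def]; push_cast; ring
        rw [this]
        exact hk₁
  -- event inclusion
  have hincl : ∀ n : ℕ, N₁ ≤ n →
      {ω | ε ≤ dist (olsSlope n (fun i => W i ω)
          (fun i => (∑ j ∈ Finset.range n, if Y j ω ≤ Y i ω then (1 : ℝ) else 0) / n)) τ}
        ⊆ Nties ∪ ({ω | δ₀ ≤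
            |(∑ i ∈ range n, ∑ j ∈ range n,
                h ((Y1 i ω, Y0 i ω, W i ω, X i ω), (Y1 j ω, Y0 j ω, W j ω, X j ω)))
              / ((n : ℝ)^2) - mval|}
          ∪ {x | δ₀ ≤ dist ((∑ i ∈ range n, W i x) / (n : ℝ)) π}) := by
    intro n hn ω hω
    have hn1 : 1 ≤ n := le_trans hN₁pos hn
    have hnR : (0:ℝ) < n := by exact_mod_cast hn1
    by_cases hNin : ω ∈ Nties
    · exact Set.mem_union_left _ hNin
    refine Set.mem_union_right _ ?_
    by_contra hAB
    rw [Set.mem_union, not_or] at hAB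
    obtain ⟨hA, hB⟩ := hAB
    simp only [Set.mem_setOf_eq, not_le] at hA hB
    simp only [Set.mem_setOf_eq] at hω
    -- no ties at ω
    have hNe : ∀ i j : ℕ, i ≠ j → Y i ω ≠ Y j ω := by
      intro i j hij hyy
      exact hNin (Set.mem_iUnion.mpr ⟨i, Set.mem_iUnion.mpr ⟨j,
        Set.mem_iUnion.mpr ⟨hij, hyy⟩⟩⟩)
    have hinj : ∀ i ∈ range n, ∀ j ∈ range n, Y i ω = Y j ω → i = j := by
      intro i _ j _ hyy
      by_contra hij
      exact hNe i j hij hyy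
    have hrsum := rank_sum n (fun i => Y i ω) hinj
    -- identify the OLS slope with ψ applied to the triple
    set V : ℕ → ℝ := fun i => (∑ j ∈ range n, if Y j ω ≤ Y i ω then (1:ℝ) else 0) / n
      with hV
    set SW : ℝ := ∑ i ∈ range n, W i ω with hSW
    set T : ℝ := (∑ i ∈ range n, ∑ j ∈ range n,
        h ((Y1 i ω, Y0 i ω, W i ω, X i ω), (Y1 j ω, Y0 j ω, W j ω, X j ω))) / ((n : ℝ)^2)
      with hT
    have hSWV : (∑ i ∈ range n, W i ω * V i) / n = T := by
      rw [hT, hV]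
      have : ∀ i ∈ range n, W i ω * ((∑ j ∈ range n, if Y j ω ≤ Y i ω then (1:ℝ) else 0) / n)
          = (∑ j ∈ range n,
              h ((Y1 i ω, Y0 i ω, W i ω, X i ω), (Y1 j ω, Y0 j ω, W j ω, X j ω))) / n := by
        intro i _
        rw [Finset.sum_congr rfl fun j _ => hpt i j ω, ← Finset.mul_sum, mul_div_assoc]
      rw [Finset.sum_congr rfl this, ← Finset.sum_div, div_div]
      congr 1
      push_cast
      ring
    have hSV : (∑ i ∈ range n, V i) / n = ((n:ℝ) + 1) / (2 * n) := by
      rw [hV, ← Finset.sum_div, hrsum]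
      field_simp
    have hols := olsSlope_eq n hn1 (fun i => W i ω) V (fun i => hbin i ω)
    have hβ : olsSlope n (fun i => W i ω) V = ψ (T, SW / n, ((n:ℝ) + 1) / (2 * n)) := by
      rw [hols, ← hSWV, ← hSV, hψ]
    -- distance bound
    have hc : dist (((n:ℝ) + 1) / (2 * n)) (1/2 : ℝ) < δ₀ := by
      rw [Real.dist_eq]
      have he : ((n:ℝ) + 1) / (2 * n) - 1/2 = 1/(2*n) := by
        field_simp
        ring
      rw [he, abs_of_pos (by positivity)]
      calc 1/(2*(n:ℝ)) ≤ 1/n := by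
            rw [div_le_div_iff₀ (by positivity) hnR]
            nlinarith
      _ < δ₀ := hN₁ n hn
    have hdist : dist (T, SW / n, ((n:ℝ) + 1) / (2 * n)) (mval, π, 1/2) < δ₀ := by
      rw [Prod.dist_eq, Prod.dist_eq]
      refine max_lt ?_ (max_lt ?_ hc)
      · rw [Real.dist_eq]; exact hA
      · exact hB
    have := hδ₀ hdist
    rw [hψval] at this
    rw [hβ] at hω
    exact absurd hω (not_le.mpr this)
  -- conclusion by squeezing
  have hup : Tendsto (fun n => P {ω | δ₀ ≤
      |(∑ i ∈ range n, ∑ j ∈ range n,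
          h ((Y1 i ω, Y0 i ω, W i ω, X i ω), (Y1 j ω, Y0 j ω, W j ω, X j ω)))
        / ((n : ℝ)^2) - mval|}
      + P {x | δ₀ ≤ dist ((∑ i ∈ range n, W i x) / (n : ℝ)) π}) atTop (𝓝 0) := by
    have := (hUstat δ₀ hδ₀pos).add (tendstoInMeasure_iff_dist.mp hWbar δ₀ hδ₀pos)
    simpa using this
  refine tendsto_of_tendsto_of_tendsto_of_le_of_le' tendsto_const_nhds hup ?_ ?_
  · exact Filter.Eventually.of_forall fun n => zero_le
  · filter_upwards [Filter.eventually_ge_atTop N₁] with n hn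
    calc P {ω | ε ≤ dist (olsSlope n (fun i => W i ω)
          (fun i => (∑ j ∈ Finset.range n, if Y j ω ≤ Y i ω then (1 : ℝ) else 0) / n)) τ}
        ≤ P (Nties ∪ ({ω | δ₀ ≤
            |(∑ i ∈ range n, ∑ j ∈ range n,
                h ((Y1 i ω, Y0 i ω, W i ω, X i ω), (Y1 j ω, Y0 j ω, W j ω, X j ω)))
              / ((n : ℝ)^2) - mval|}
          ∪ {x | δ₀ ≤ dist ((∑ i ∈ range n, W i x) / (n : ℝ)) π})) :=
          measure_mono (hincl n hn)
    _ ≤ P Nties + P ({ω | δ₀ ≤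
            |(∑ i ∈ range n, ∑ j ∈ range n,
                h ((Y1 i ω, Y0 i ω, W i ω, X i ω), (Y1 j ω, Y0 j ω, W j ω, X j ω)))
              / ((n : ℝ)^2) - mval|}
          ∪ {x | δ₀ ≤ dist ((∑ i ∈ range n, W i x) / (n : ℝ)) π}) := measure_union_le _ _
    _ ≤ P Nties + (P {ω | δ₀ ≤
            |(∑ i ∈ range n, ∑ j ∈ range n,
                h ((Y1 i ω, Y0 i ω, W i ω, X i ω), (Y1 j ω, Y0 j ω, W j ω, X j ω)))
              / ((n : ℝ)^2) - mval|}
          + P {x | δ₀ ≤ dist ((∑ i ∈ range n, W i x) / (n : ℝ)) π}) := by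
          exact add_le_add le_rfl (measure_union_le _ _)
    _ = _ := by rw [hNnull, zero_add]
end
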